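/- arXiv:1510.08276 — 5 statements merged into one kernel-verified Lean document; each statement's English description precedes it below -/
import Mathlib

section
/- Let G be a finite simple graph and X ⊆ V(G) a vertex set such that the subgraph of G induced by X is isomorphic to a member of F. Then opt_asso(G − X) ≤ opt_asso(G) − 2. -/
open SimpleGraph

/-- `M` is a module of `G`: every vertex outside `M` is adjacent to all
vertices of `M` or to none of them. -/
def IsModule {V : Type*} (G : SimpleGraph V) (M : Set V) : Prop :=
  ∀ x ∉ M, (∀ a ∈ M, G.Adj x a) ∨ (∀ a ∈ M, ¬ G.Adj x a)

/-- A module is strong if it overlaps no other module. -/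
def IsStrongModule {V : Type*} (G : SimpleGraph V) (M : Set V) : Prop :=
  IsModule G M ∧
    ∀ M' : Set V, IsModule G M' → (M ∩ M').Nonempty → M ⊆ M' ∨ M' ⊆ M

/-- A nonempty strong module ≠ V(G) whose only proper strong superset is V(G). -/
def IsMaximalStrongModule {V : Type*} (G : SimpleGraph V) (M : Set V) : Prop :=
  IsStrongModule G M ∧ M.Nonempty ∧ M ≠ Set.univ ∧
    ∀ M' : Set V, IsStrongModule G M' → M ⊂ M' → M' = Set.univ

/-- Quotient graph defined by a family `P` of vertex sets: two members are
adjacent iff they are distinct and completely adjacent in `G`. -/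
def QuotientOn {V : Type*} (G : SimpleGraph V) (P : Set (Set V)) : SimpleGraph P where
  Adj A B := A ≠ B ∧ ∀ a ∈ (A : Set V), ∀ b ∈ (B : Set V), G.Adj a b
  symm := by
    constructor
    intro A B h
    exact ⟨Ne.symm h.1, fun b hb a ha => (h.2 a ha b hb).symm⟩
  loopless := by
    constructor
    intro A h
    exact h.1 rfl

/-- The quotient graph Q̃(G), on the maximal strong modules of `G`. -/
def QuotientGraph {V : Type*} (G : SimpleGraph V) :
    SimpleGraph {M : Set V | IsMaximalStrongModule G M} :=
  QuotientOn G {M : Set V | IsMaximalStrongModule G M}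

/-- A graph is prime if it has at least four vertices and all its modules are
trivial (empty, singletons, or the whole vertex set). -/
def IsPrimeGraph {W : Type*} (H : SimpleGraph W) : Prop :=
  4 ≤ Nat.card W ∧
    ∀ M : Set W, IsModule H M → M = ∅ ∨ M = Set.univ ∨ ∃ w, M = {w}

/-- `G` contains an induced copy of `H`. -/
def HasInducedCopy {W V : Type*} (H : SimpleGraph W) (G : SimpleGraph V) : Prop :=
  ∃ f : W ↪ V, ∀ a b : W, G.Adj (f a) (f b) ↔ H.Adj a b

/-- The path on four vertices. -/
def GraphP4 : SimpleGraph (Fin 4) :=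
  SimpleGraph.fromRel fun a b =>
    (a, b) ∈ ([(0, 1), (1, 2), (2, 3)] : List (Fin 4 × Fin 4))

/-- The cycle on four vertices. -/
def GraphC4 : SimpleGraph (Fin 4) :=
  SimpleGraph.fromRel fun a b =>
    (a, b) ∈ ([(0, 1), (1, 2), (2, 3), (0, 3)] : List (Fin 4 × Fin 4))

/-- The bull: triangle 0,1,2 with pendant 3 at 0 and pendant 4 at 2. -/
def GraphBull : SimpleGraph (Fin 5) :=
  SimpleGraph.fromRel fun a b =>
    (a, b) ∈ ([(0, 1), (0, 2), (1, 2), (0, 3), (2, 4)] : List (Fin 5 × Fin 5))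

/-- The dart: triangle 0,1,2; vertex 4 adjacent exactly to 0 and 2;
vertex 3 adjacent exactly to 0. -/
def GraphDart : SimpleGraph (Fin 5) :=
  SimpleGraph.fromRel fun a b =>
    (a, b) ∈ ([(0, 1), (0, 2), (1, 2), (0, 4), (2, 4), (0, 3)] : List (Fin 5 × Fin 5))

/-- The fox: adjacent vertices 0,1 and pairwise nonadjacent 2,3,4, each
adjacent to both 0 and 1 (K5 minus a triangle). -/
def GraphFox : SimpleGraph (Fin 5) :=
  SimpleGraph.fromRel fun a b =>
    (a, b) ∈ ([(0, 1), (0, 2), (0, 3), (0, 4), (1, 2), (1, 3), (1, 4)] : List (Fin 5 × Fin 5))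

/-- The gem: induced path 0-1-2-3 plus vertex 4 adjacent to all of them. -/
def GraphGem : SimpleGraph (Fin 5) :=
  SimpleGraph.fromRel fun a b =>
    (a, b) ∈ ([(0, 1), (1, 2), (2, 3), (0, 4), (1, 4), (2, 4), (3, 4)] : List (Fin 5 × Fin 5))

/-- `G` has no induced subgraph isomorphic to a member of
F = {C4, bull, dart, fox, gem}. -/
def FFree {V : Type*} (G : SimpleGraph V) : Prop :=
  ¬ HasInducedCopy GraphC4 G ∧ ¬ HasInducedCopy GraphBull G ∧
  ¬ HasInducedCopy GraphDart G ∧ ¬ HasInducedCopy GraphFox G ∧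
  ¬ HasInducedCopy GraphGem G

/-- `X` is an association set of `G`: the graph `G - X` has no induced `P₃`,
i.e., every component of `G - X` is a clique. -/
def IsAssociationSet {V : Type*} (G : SimpleGraph V) (X : Set V) : Prop :=
  ∀ a b c : V, a ∉ X → b ∉ X → c ∉ X →
    G.Adj a b → G.Adj b c → a ≠ c → G.Adj a c

/-- `X` is a dissociation set of `G`: the graph `G - X` has no `P₃` subgraph,
i.e., every component of `G - X` has at most two vertices. -/
def IsDissociationSet {V : Type*} (G : SimpleGraph V) (X : Set V) : Prop :=
  ∀ a b c : V, a ∉ X → b ∉ X → c ∉ X → G.Adj a b → G.Adj b c → a = c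

/-- Minimum cardinality of an association set of `G`. -/
noncomputable def optAsso {V : Type*} (G : SimpleGraph V) : ℕ :=
  sInf {n : ℕ | ∃ X : Set V, IsAssociationSet G X ∧ X.ncard = n}

/-- Minimum cardinality of a dissociation set of `G`. -/
noncomputable def optDiss {V : Type*} (G : SimpleGraph V) : ℕ :=
  sInf {n : ℕ | ∃ X : Set V, IsDissociationSet G X ∧ X.ncard = n}

/-- Every association set of a graph in which every vertex avoids some induced P3
has at least two vertices. -/
lemma two_le_ncard_asso {W : Type*} [Fintype W] [Nonempty W] (H : SimpleGraph W)
    (hH : ∀ w : W, ∃ a b c : W, a ≠ w ∧ b ≠ w ∧ c ≠ w ∧ H.Adj a b ∧ H.Adj b c ∧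
      a ≠ c ∧ ¬ H.Adj a c)
    (S : Set W) (hS : IsAssociationSet H S) : 2 ≤ S.ncard := by
  by_contra h
  push_neg at h
  have hle : S.ncard ≤ 1 := by omega
  obtain ⟨w, hw⟩ : ∃ w : W, S ⊆ {w} := by
    rcases S.eq_empty_or_nonempty with he | ⟨x, hx⟩
    · exact ⟨Classical.arbitrary W, by simp [he]⟩
    · refine ⟨x, fun y hy => ?_⟩
      have := (Set.ncard_le_one (S.toFinite)).mp hle y hy x hx
      simp [this]
  obtain ⟨a, b, c, ha, hb, hc, hab, hbc, hac, hnac⟩ := hH w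
  exact hnac (hS a b c (fun h => ha (hw h)) (fun h => hb (hw h)) (fun h => hc (hw h))
    hab hbc hac)

lemma asso_preimage {V : Type*} (G : SimpleGraph V) (Y : Set V)
    (hY : IsAssociationSet G Y) (A : Set V) :
    IsAssociationSet (G.induce A) (Subtype.val ⁻¹' Y) := by
  intro a b c ha hb hc hab hbc hac
  simp only [comap_adj, Function.Embedding.coe_subtype] at hab hbc ⊢
  exact hY a.1 b.1 c.1 ha hb hc hab hbc (fun h => hac (Subtype.ext h))

lemma asso_image_iso {A W : Type*} (H1 : SimpleGraph A) (H : SimpleGraph W)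
    (e : H1 ≃g H) (S : Set A) (hS : IsAssociationSet H1 S) :
    IsAssociationSet H (e '' S) := by
  intro a b c ha hb hc hab hbc hac
  have ha' : e.symm a ∉ S := fun h => ha ⟨e.symm a, h, e.apply_symm_apply a⟩
  have hb' : e.symm b ∉ S := fun h => hb ⟨e.symm b, h, e.apply_symm_apply b⟩
  have hc' : e.symm c ∉ S := fun h => hc ⟨e.symm c, h, e.apply_symm_apply c⟩
  have h1 : H1.Adj (e.symm a) (e.symm b) := e.symm.map_adj_iff.mpr hab
  have h2 : H1.Adj (e.symm b) (e.symm c) := e.symm.map_adj_iff.mpr hbc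
  have h3 : e.symm a ≠ e.symm c := fun h => hac (e.symm.injective h)
  have := hS _ _ _ ha' hb' hc' h1 h2 h3
  have := e.map_adj_iff.mpr this
  simpa using this

set_option synthInstance.maxSize 10000 in
set_option maxHeartbeats 1000000 in
lemma P3_free_witness_C4 : ∀ w : Fin 4, ∃ a b c : Fin 4, a ≠ w ∧ b ≠ w ∧ c ≠ w ∧
    GraphC4.Adj a b ∧ GraphC4.Adj b c ∧ a ≠ c ∧ ¬ GraphC4.Adj a c := by
  simp only [GraphC4, fromRel_adj]; decide

set_option synthInstance.maxSize 10000 in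
set_option maxHeartbeats 1000000 in
lemma P3_free_witness_Bull : ∀ w : Fin 5, ∃ a b c : Fin 5, a ≠ w ∧ b ≠ w ∧ c ≠ w ∧
    GraphBull.Adj a b ∧ GraphBull.Adj b c ∧ a ≠ c ∧ ¬ GraphBull.Adj a c := by
  simp only [GraphBull, fromRel_adj]; decide

set_option synthInstance.maxSize 10000 in
set_option maxHeartbeats 1000000 in
lemma P3_free_witness_Dart : ∀ w : Fin 5, ∃ a b c : Fin 5, a ≠ w ∧ b ≠ w ∧ c ≠ w ∧
    GraphDart.Adj a b ∧ GraphDart.Adj b c ∧ a ≠ c ∧ ¬ GraphDart.Adj a c := by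
  simp only [GraphDart, fromRel_adj]; decide

set_option synthInstance.maxSize 10000 in
set_option maxHeartbeats 1000000 in
lemma P3_free_witness_Fox : ∀ w : Fin 5, ∃ a b c : Fin 5, a ≠ w ∧ b ≠ w ∧ c ≠ w ∧
    GraphFox.Adj a b ∧ GraphFox.Adj b c ∧ a ≠ c ∧ ¬ GraphFox.Adj a c := by
  simp only [GraphFox, fromRel_adj]; decide

set_option synthInstance.maxSize 10000 in
set_option maxHeartbeats 1000000 in
lemma P3_free_witness_Gem : ∀ w : Fin 5, ∃ a b c : Fin 5, a ≠ w ∧ b ≠ w ∧ c ≠ w ∧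
    GraphGem.Adj a b ∧ GraphGem.Adj b c ∧ a ≠ c ∧ ¬ GraphGem.Adj a c := by
  simp only [GraphGem, fromRel_adj]; decide

/-- If `G[X]` is isomorphic to a member of F, then
`opt_asso (G - X) ≤ opt_asso G - 2`. -/
theorem stmt_1 {V : Type*} [Fintype V] (G : SimpleGraph V) (X : Set V)
    (hX : Nonempty (G.induce X ≃g GraphC4) ∨ Nonempty (G.induce X ≃g GraphBull) ∨
      Nonempty (G.induce X ≃g GraphDart) ∨ Nonempty (G.induce X ≃g GraphFox) ∨
      Nonempty (G.induce X ≃g GraphGem)) :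
    optAsso (G.induce Xᶜ) + 2 ≤ optAsso G := by
  classical
  -- the defining set of optAsso G is nonempty (univ is an association set)
  have hne : {n : ℕ | ∃ Y : Set V, IsAssociationSet G Y ∧ Y.ncard = n}.Nonempty :=
    ⟨(Set.univ : Set V).ncard, Set.univ, fun a b c ha => absurd (Set.mem_univ a) ha, rfl⟩
  obtain ⟨Y, hY, hYcard⟩ := Nat.sInf_mem hne
  -- Y ∩ X gives an association set of G[X], which has ncard ≥ 2 via the iso
  set S : Set X := Subtype.val ⁻¹' Y with hSdef
  have hS : IsAssociationSet (G.induce X) S := asso_preimage G Y hY X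
  have hScard : S.ncard = (Y ∩ X).ncard := by
    rw [← Set.ncard_image_of_injective S Subtype.val_injective,
      Set.image_preimage_eq_inter_range, Subtype.range_coe, Set.inter_comm]
  have h2 : 2 ≤ (Y ∩ X).ncard := by
    rw [← hScard]
    rcases hX with ⟨⟨e⟩⟩ | ⟨⟨e⟩⟩ | ⟨⟨e⟩⟩ | ⟨⟨e⟩⟩ | ⟨⟨e⟩⟩
    all_goals {
      first
      | (have := two_le_ncard_asso GraphC4 P3_free_witness_C4 (e '' S)
          (asso_image_iso _ _ e S hS))
      | (have := two_le_ncard_asso GraphBull P3_free_witness_Bull (e '' S)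
          (asso_image_iso _ _ e S hS))
      | (have := two_le_ncard_asso GraphDart P3_free_witness_Dart (e '' S)
          (asso_image_iso _ _ e S hS))
      | (have := two_le_ncard_asso GraphFox P3_free_witness_Fox (e '' S)
          (asso_image_iso _ _ e S hS))
      | (have := two_le_ncard_asso GraphGem P3_free_witness_Gem (e '' S)
          (asso_image_iso _ _ e S hS))
      rwa [Set.ncard_image_of_injective S e.injective] at this }
  -- Y ∩ Xᶜ gives an association set of G - X
  set T : Set ↥Xᶜ := Subtype.val ⁻¹' Y with hTdef
  have hT : IsAssociationSet (G.induce Xᶜ) T := asso_preimage G Y hY Xᶜ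
  have hTcard : T.ncard = (Y ∩ Xᶜ).ncard := by
    rw [← Set.ncard_image_of_injective T Subtype.val_injective,
      Set.image_preimage_eq_inter_range, Subtype.range_coe, Set.inter_comm]
  have hopt : optAsso (G.induce Xᶜ) ≤ (Y ∩ Xᶜ).ncard := by
    rw [← hTcard]
    exact Nat.sInf_le ⟨T, hT, rfl⟩
  -- combine
  have hsplit : (Y ∩ X).ncard + (Y ∩ Xᶜ).ncard = Y.ncard := by
    rw [← Set.ncard_inter_add_ncard_diff_eq_ncard Y X Y.toFinite, Set.diff_eq]
  have hG : Y.ncard = optAsso G := hYcard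
  omega
end

section
/- Let G be a connected F-free finite simple graph that is not a clique, and suppose V(G) admits no partition into three sets U, C1, C2 such that every vertex of U is adjacent to all other vertices of G, C1 and C2 both induce cliques, and there is no edge between C1 and C2. Then the quotient graph Q̃(G) is triangle-free (contains no three pairwise adjacent vertices). -/
open SimpleGraph

/- ### Auxiliary machinery -/

namespace Stmt2Aux

instance : DecidableRel GraphC4.Adj := fun a b =>
  decidable_of_iff _ (SimpleGraph.fromRel_adj _ a b).symm
instance : DecidableRel GraphBull.Adj := fun a b =>
  decidable_of_iff _ (SimpleGraph.fromRel_adj _ a b).symm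
instance : DecidableRel GraphDart.Adj := fun a b =>
  decidable_of_iff _ (SimpleGraph.fromRel_adj _ a b).symm
instance : DecidableRel GraphFox.Adj := fun a b =>
  decidable_of_iff _ (SimpleGraph.fromRel_adj _ a b).symm
instance : DecidableRel GraphGem.Adj := fun a b =>
  decidable_of_iff _ (SimpleGraph.fromRel_adj _ a b).symm

/-- Adjacency matrix of the 5-vertex model: triangle 0,1,2, vertex 3 with
bits `s`, vertex 4 with bits `t`, `e` between 3 and 4. -/
def mAdj (s0 s1 s2 t0 t1 t2 e : Bool) : Fin 5 → Fin 5 → Bool :=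
  ![![false,true,true,s0,t0],![true,false,true,s1,t1],![true,true,false,s2,t2],
    ![s0,s1,s2,false,e],![t0,t1,t2,e,false]]

/-- `F` embeds as an induced subgraph into the Boolean matrix graph `M`. -/
def copyB {m n : ℕ} (M : Fin n → Fin n → Bool) (F : SimpleGraph (Fin m))
    [DecidableRel F.Adj] : Prop :=
  ∃ h : Fin m → Fin n, Function.Injective h ∧ ∀ a b, (M (h a) (h b) = true ↔ F.Adj a b)

instance {m n : ℕ} (M : Fin n → Fin n → Bool) (F : SimpleGraph (Fin m))
    [DecidableRel F.Adj] : Decidable (copyB M F) := by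
  unfold copyB; infer_instance

variable {V : Type*} {G : SimpleGraph V}

lemma transfer {m n : ℕ} {F : SimpleGraph (Fin m)} [DecidableRel F.Adj]
    {M : Fin n → Fin n → Bool} (g : Fin n → V) (ginj : Function.Injective g)
    (hbig : ∀ p q, G.Adj (g p) (g q) ↔ M p q = true)
    (hcopy : copyB M F) : HasInducedCopy F G := by
  obtain ⟨h, hinj, hiff⟩ := hcopy
  exact ⟨⟨fun i => g (h i), ginj.comp hinj⟩,
    fun a b => (hbig (h a) (h b)).trans (hiff a b)⟩

/-- The standard 5-vertex map. -/
def emb5 {V : Type*} (x1 x2 x3 u v : V) : Fin 5 → V := fun i =>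
  if i = 0 then x1 else if i = 1 then x2 else if i = 2 then x3 else if i = 3 then u else v

lemma emb5_inj {x1 x2 x3 u v : V}
    (h12 : x1 ≠ x2) (h13 : x1 ≠ x3) (h23 : x2 ≠ x3)
    (hu1 : u ≠ x1) (hu2 : u ≠ x2) (hu3 : u ≠ x3)
    (hv1 : v ≠ x1) (hv2 : v ≠ x2) (hv3 : v ≠ x3) (huv : u ≠ v) :
    Function.Injective (emb5 x1 x2 x3 u v) := by
  intro i j hij
  fin_cases i <;> fin_cases j <;> simp_all [emb5]

lemma emb5_iff {x1 x2 x3 u v : V} {s0 s1 s2 t0 t1 t2 e : Bool}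
    (a12 : G.Adj x1 x2) (a13 : G.Adj x1 x3) (a23 : G.Adj x2 x3)
    (hs0 : G.Adj u x1 ↔ s0 = true) (hs1 : G.Adj u x2 ↔ s1 = true)
    (hs2 : G.Adj u x3 ↔ s2 = true)
    (ht0 : G.Adj v x1 ↔ t0 = true) (ht1 : G.Adj v x2 ↔ t1 = true)
    (ht2 : G.Adj v x3 ↔ t2 = true)
    (he : G.Adj u v ↔ e = true) :
    ∀ p q : Fin 5, G.Adj (emb5 x1 x2 x3 u v p) (emb5 x1 x2 x3 u v q) ↔
      mAdj s0 s1 s2 t0 t1 t2 e p q = true := by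
  have hloop : ∀ w : V, ¬ G.Adj w w := fun w => G.loopless.irrefl w
  have a21 := a12.symm; have a31 := a13.symm; have a32 := a23.symm
  have hs0' : G.Adj x1 u ↔ s0 = true := (G.adj_comm x1 u).trans hs0
  have hs1' : G.Adj x2 u ↔ s1 = true := (G.adj_comm x2 u).trans hs1
  have hs2' : G.Adj x3 u ↔ s2 = true := (G.adj_comm x3 u).trans hs2
  have ht0' : G.Adj x1 v ↔ t0 = true := (G.adj_comm x1 v).trans ht0
  have ht1' : G.Adj x2 v ↔ t1 = true := (G.adj_comm x2 v).trans ht1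
  have ht2' : G.Adj x3 v ↔ t2 = true := (G.adj_comm x3 v).trans ht2
  have he' : G.Adj v u ↔ e = true := (G.adj_comm v u).trans he
  intro p q
  fin_cases p <;> fin_cases q <;> simp_all [emb5, mAdj]

lemma master : ∀ (s0 s1 s2 t0 t1 t2 e : Bool),
    (s0 ≠ s1 ∨ t0 ≠ t1) → (s0 ≠ s2 ∨ t0 ≠ t2) → (s1 ≠ s2 ∨ t1 ≠ t2) →
    (copyB (mAdj s0 s1 s2 t0 t1 t2 e) GraphC4 ∨ copyB (mAdj s0 s1 s2 t0 t1 t2 e) GraphBull ∨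
    copyB (mAdj s0 s1 s2 t0 t1 t2 e) GraphDart ∨ copyB (mAdj s0 s1 s2 t0 t1 t2 e) GraphFox ∨
    copyB (mAdj s0 s1 s2 t0 t1 t2 e) GraphGem) := by
  intro s0 s1 s2 t0 t1 t2 e h01 h02 h12
  cases s0 <;> cases s1 <;> cases s2 <;> cases t0 <;> cases t1 <;> cases t2 <;> cases e
  · simp at h01
  · simp at h01
  · simp at h01
  · simp at h01
  · simp at h02
  · simp at h02
  · simp at h12
  · simp at h12
  · simp at h12
  · simp at h12
  · simp at h02
  · simp at h02
  · simp at h01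
  · simp at h01
  · simp at h01
  · simp at h01
  · simp at h01
  · simp at h01
  · simp at h01
  · simp at h01
  · exact Or.inr <| Or.inl ⟨![1,0,2,4,3], by decide, by decide⟩
  · exact Or.inl ⟨![1,2,3,4], by decide, by decide⟩
  · exact Or.inr <| Or.inr <| Or.inl ⟨![2,0,1,3,4], by decide, by decide⟩
  · exact Or.inr <| Or.inr <| Or.inr <| Or.inr ⟨![0,1,4,3,2], by decide, by decide⟩
  · exact Or.inr <| Or.inl ⟨![0,1,2,4,3], by decide, by decide⟩
  · exact Or.inl ⟨![0,2,3,4], by decide, by decide⟩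
  · exact Or.inr <| Or.inr <| Or.inl ⟨![2,1,0,3,4], by decide, by decide⟩
  · exact Or.inr <| Or.inr <| Or.inr <| Or.inr ⟨![1,0,4,3,2], by decide, by decide⟩
  · simp at h01
  · simp at h01
  · simp at h01
  · simp at h01
  · simp at h02
  · simp at h02
  · exact Or.inr <| Or.inl ⟨![1,0,2,3,4], by decide, by decide⟩
  · exact Or.inl ⟨![1,2,4,3], by decide, by decide⟩
  · simp at h02
  · simp at h02
  · exact Or.inr <| Or.inr <| Or.inl ⟨![1,0,2,3,4], by decide, by decide⟩
  · exact Or.inr <| Or.inr <| Or.inr <| Or.inr ⟨![0,2,4,3,1], by decide, by decide⟩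
  · exact Or.inr <| Or.inl ⟨![0,2,1,4,3], by decide, by decide⟩
  · exact Or.inl ⟨![0,1,3,4], by decide, by decide⟩
  · simp at h02
  · simp at h02
  · exact Or.inr <| Or.inr <| Or.inl ⟨![1,2,0,3,4], by decide, by decide⟩
  · exact Or.inr <| Or.inr <| Or.inr <| Or.inr ⟨![2,0,4,3,1], by decide, by decide⟩
  · simp at h02
  · simp at h02
  · simp at h12
  · simp at h12
  · exact Or.inr <| Or.inr <| Or.inl ⟨![2,0,1,4,3], by decide, by decide⟩
  · exact Or.inr <| Or.inr <| Or.inr <| Or.inr ⟨![0,1,3,4,2], by decide, by decide⟩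
  · exact Or.inr <| Or.inr <| Or.inl ⟨![1,0,2,4,3], by decide, by decide⟩
  · exact Or.inr <| Or.inr <| Or.inr <| Or.inr ⟨![0,2,3,4,1], by decide, by decide⟩
  · simp at h12
  · simp at h12
  · simp at h12
  · simp at h12
  · exact Or.inr <| Or.inr <| Or.inr <| Or.inr ⟨![3,1,0,4,2], by decide, by decide⟩
  · exact Or.inl ⟨![0,1,3,4], by decide, by decide⟩
  · exact Or.inr <| Or.inr <| Or.inr <| Or.inr ⟨![3,2,0,4,1], by decide, by decide⟩
  · exact Or.inl ⟨![0,2,3,4], by decide, by decide⟩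
  · simp at h12
  · simp at h12
  · simp at h12
  · simp at h12
  · exact Or.inr <| Or.inl ⟨![0,1,2,3,4], by decide, by decide⟩
  · exact Or.inl ⟨![0,2,4,3], by decide, by decide⟩
  · exact Or.inr <| Or.inl ⟨![0,2,1,3,4], by decide, by decide⟩
  · exact Or.inl ⟨![0,1,4,3], by decide, by decide⟩
  · simp at h12
  · simp at h12
  · simp at h12
  · simp at h12
  · exact Or.inr <| Or.inr <| Or.inl ⟨![0,1,2,3,4], by decide, by decide⟩
  · exact Or.inr <| Or.inr <| Or.inr <| Or.inr ⟨![1,2,4,3,0], by decide, by decide⟩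
  · exact Or.inr <| Or.inr <| Or.inl ⟨![0,2,1,3,4], by decide, by decide⟩
  · exact Or.inr <| Or.inr <| Or.inr <| Or.inr ⟨![2,1,4,3,0], by decide, by decide⟩
  · simp at h12
  · simp at h12
  · simp at h02
  · simp at h02
  · exact Or.inr <| Or.inr <| Or.inl ⟨![2,1,0,4,3], by decide, by decide⟩
  · exact Or.inr <| Or.inr <| Or.inr <| Or.inr ⟨![1,0,3,4,2], by decide, by decide⟩
  · simp at h02
  · simp at h02
  · exact Or.inr <| Or.inr <| Or.inr <| Or.inr ⟨![3,0,1,4,2], by decide, by decide⟩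
  · exact Or.inl ⟨![0,1,4,3], by decide, by decide⟩
  · exact Or.inr <| Or.inr <| Or.inl ⟨![0,1,2,4,3], by decide, by decide⟩
  · exact Or.inr <| Or.inr <| Or.inr <| Or.inr ⟨![1,2,3,4,0], by decide, by decide⟩
  · simp at h02
  · simp at h02
  · exact Or.inr <| Or.inr <| Or.inr <| Or.inr ⟨![3,2,1,4,0], by decide, by decide⟩
  · exact Or.inl ⟨![1,2,3,4], by decide, by decide⟩
  · simp at h02
  · simp at h02
  · simp at h01
  · simp at h01
  · simp at h01
  · simp at h01
  · exact Or.inr <| Or.inr <| Or.inl ⟨![1,2,0,4,3], by decide, by decide⟩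
  · exact Or.inr <| Or.inr <| Or.inr <| Or.inr ⟨![2,0,3,4,1], by decide, by decide⟩
  · exact Or.inr <| Or.inr <| Or.inr <| Or.inr ⟨![3,0,2,4,1], by decide, by decide⟩
  · exact Or.inl ⟨![0,2,4,3], by decide, by decide⟩
  · exact Or.inr <| Or.inr <| Or.inl ⟨![0,2,1,4,3], by decide, by decide⟩
  · exact Or.inr <| Or.inr <| Or.inr <| Or.inr ⟨![2,1,3,4,0], by decide, by decide⟩
  · exact Or.inr <| Or.inr <| Or.inr <| Or.inr ⟨![3,1,2,4,0], by decide, by decide⟩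
  · exact Or.inl ⟨![1,2,4,3], by decide, by decide⟩
  · simp at h01
  · simp at h01
  · simp at h01
  · simp at h01
  · simp at h01
  · simp at h01
  · simp at h01
  · simp at h01
  · simp at h02
  · simp at h02
  · simp at h12
  · simp at h12
  · simp at h12
  · simp at h12
  · simp at h02
  · simp at h02
  · simp at h01
  · simp at h01
  · simp at h01
  · simp at h01

end Stmt2Aux

namespace Stmt2Aux

variable {V : Type*} {G : SimpleGraph V}

lemma walk_stay {H : SimpleGraph V} {P : Set V}
    (hstep : ∀ p q, p ∈ P → H.Adj p q → q ∈ P) :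
    ∀ {x y : V}, H.Walk x y → x ∈ P → y ∈ P := by
  intro x y w
  induction w with
  | nil => exact id
  | cons h _ ih => exact fun hx => ih (hstep _ _ hx h)

lemma mod_union {A B : Set V} (hA : IsModule G A) (hB : IsModule G B)
    (hAB : (A ∩ B).Nonempty) : IsModule G (A ∪ B) := by
  obtain ⟨m, hmA, hmB⟩ := hAB
  intro x hx
  have hxA : x ∉ A := fun h => hx (Or.inl h)
  have hxB : x ∉ B := fun h => hx (Or.inr h)
  rcases hA x hxA with hA1 | hA0
  · refine Or.inl fun a ha => ?_
    rcases ha with ha | ha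
    · exact hA1 a ha
    · rcases hB x hxB with hB1 | hB0
      · exact hB1 a ha
      · exact absurd (hA1 m hmA) (hB0 m hmB)
  · refine Or.inr fun a ha => ?_
    rcases ha with ha | ha
    · exact hA0 a ha
    · rcases hB x hxB with hB1 | hB0
      · exact absurd (hB1 m hmB) (hA0 m hmA)
      · exact hB0 a ha

/-- uniformity helper -/
lemma mod_uniform {S : Set V} (hS : IsModule G S) {x p q : V} (hx : x ∉ S)
    (hp : p ∈ S) (hq : q ∈ S) : G.Adj x p ↔ G.Adj x q := by
  rcases hS x hx with h | h
  · exact iff_of_true (h p hp) (h q hq)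
  · exact iff_of_false (h p hp) (h q hq)

lemma overlap_union_univ {A B : Set V} (hA : IsModule G A) (hB : IsModule G B)
    (hAB : (A ∩ B).Nonempty) (hAu : A ≠ Set.univ) (hBu : B ≠ Set.univ)
    (hU : A ∪ B = Set.univ) (hconn : G.Connected) (hpre : Gᶜ.Preconnected) : False := by
  obtain ⟨b, hbB'⟩ := (Set.ne_univ_iff_exists_notMem _).mp hAu
  obtain ⟨a, haB'⟩ := (Set.ne_univ_iff_exists_notMem _).mp hBu
  have hmem : ∀ z : V, z ∈ A ∪ B := fun z => hU ▸ Set.mem_univ z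
  have haA : a ∈ A := (hmem a).resolve_right haB'
  have hbB : b ∈ B := (hmem b).resolve_left hbB'
  -- cross adjacency is uniform
  have cross : ∀ {x y : V}, x ∈ A → x ∉ B → y ∈ B → y ∉ A →
      (G.Adj x y ↔ G.Adj a b) := by
    intro x y hxA hxB hyB hyA
    have h1 : G.Adj x y ↔ G.Adj x b := mod_uniform hB hxB hyB hbB
    have h2 : G.Adj x b ↔ G.Adj a b :=
      (G.adj_comm x b).trans ((mod_uniform hA hbB' hxA haA).trans (G.adj_comm b a))
    exact h1.trans h2
  have midA : ∀ {x m : V}, x ∈ A → x ∉ B → m ∈ A → m ∈ B →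
      (G.Adj x m ↔ G.Adj a b) := by
    intro x m hxA hxB hmA hmB
    exact (mod_uniform hB hxB hmB hbB).trans (cross hxA hxB hbB hbB')
  have midB : ∀ {y m : V}, y ∈ B → y ∉ A → m ∈ A → m ∈ B →
      (G.Adj y m ↔ G.Adj a b) := by
    intro y m hyB hyA hmA hmB
    exact (mod_uniform hA hyA hmA haA).trans
      ((G.adj_comm y a).trans (cross haA haB' hyB hyA))
  by_cases hab : G.Adj a b
  · -- complement walks starting in A \ B stay there
    have hstep : ∀ p q, p ∈ A \ B → Gᶜ.Adj p q → q ∈ A \ B := by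
      intro p q hp hpq
      rcases (SimpleGraph.compl_adj G p q).mp hpq with ⟨hne, hnadj⟩
      by_cases hqB : q ∈ B
      · by_cases hqA : q ∈ A
        · exact absurd ((midA hp.1 hp.2 hqA hqB).mpr hab) hnadj
        · exact absurd ((cross hp.1 hp.2 hqB hqA).mpr hab) hnadj
      · exact ⟨(hmem q).resolve_right hqB, hqB⟩
    obtain ⟨w⟩ := hpre a b
    exact (walk_stay hstep w ⟨haA, haB'⟩).2 hbB
  · have hstep : ∀ p q, p ∈ A \ B → G.Adj p q → q ∈ A \ B := by
      intro p q hp hpq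
      by_cases hqB : q ∈ B
      · by_cases hqA : q ∈ A
        · exact absurd ((midA hp.1 hp.2 hqA hqB).mp hpq) hab
        · exact absurd ((cross hp.1 hp.2 hqB hqA).mp hpq) hab
      · exact ⟨(hmem q).resolve_right hqB, hqB⟩
    obtain ⟨w⟩ := hconn.preconnected a b
    exact (walk_stay hstep w ⟨haA, haB'⟩).2 hbB

lemma msm_inter_empty {M N : Set V} (hM : IsMaximalStrongModule G M)
    (hN : IsMaximalStrongModule G N) (hne : M ≠ N) : M ∩ N = ∅ := by
  by_contra h
  obtain ⟨x, hxM, hxN⟩ := Set.nonempty_iff_ne_empty.mpr h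
  rcases hM.1.2 N hN.1.1 ⟨x, hxM, hxN⟩ with hMN | hNM
  · exact hN.2.2.1 (hM.2.2.2 N hN.1 (hMN.ssubset_of_ne hne))
  · exact hM.2.2.1 (hN.2.2.2 M hM.1 (hNM.ssubset_of_ne (Ne.symm hne)))

lemma union_not_module [Fintype V] (hconn : G.Connected) (hpre : Gᶜ.Preconnected)
    {M N : Set V} (hM : IsMaximalStrongModule G M) (hNmod : IsModule G N)
    (hNne : N.Nonempty) (hdisj : M ∩ N = ∅) (hproper : M ∪ N ≠ Set.univ) :
    ¬ IsModule G (M ∪ N) := by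
  intro hmod
  set Fam : Set (Set V) := {A | IsModule G A ∧ M ∪ N ⊆ A ∧ A ≠ Set.univ} with hFam
  have hSF : M ∪ N ∈ Fam := ⟨hmod, le_refl _, hproper⟩
  obtain ⟨A, hAF, hmax⟩ : ∃ A ∈ Fam, ∀ A' ∈ Fam, id A ≤ id A' → id A = id A' := by
    obtain ⟨A, hA, hm⟩ := Set.Finite.exists_maximalFor id Fam (Set.toFinite _) ⟨M ∪ N, hSF⟩
    exact ⟨A, hA, fun A' h1 h2 => le_antisymm h2 (hm h1 h2)⟩
  have hMA : M ⊆ A := (Set.subset_union_left).trans hAF.2.1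
  have hMA' : M ≠ A := by
    obtain ⟨n, hn⟩ := hNne
    intro h
    have : n ∈ M := h ▸ (hAF.2.1 (Or.inr hn))
    exact absurd (Set.mem_inter this hn) (by rw [hdisj]; exact id)
  have hstrong : IsStrongModule G A := by
    refine ⟨hAF.1, fun B hB hABne => ?_⟩
    by_contra hcon
    push_neg at hcon
    have hBu : B ≠ Set.univ := fun h => hcon.1 (h ▸ Set.subset_univ A)
    have hu : IsModule G (A ∪ B) := mod_union hAF.1 hB hABne
    by_cases hUniv : A ∪ B = Set.univ
    · exact overlap_union_univ hAF.1 hB hABne hAF.2.2 hBu hUniv hconn hpre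
    · have hmem : A ∪ B ∈ Fam := ⟨hu, hAF.2.1.trans Set.subset_union_left, hUniv⟩
      have := hmax _ hmem Set.subset_union_left
      exact hcon.2 (by rw [show A = A ∪ B from this]; exact Set.subset_union_right)
  exact hAF.2.2 (hM.2.2.2 A hstrong (hMA.ssubset_of_ne hMA'))

lemma distinguisher {Mi Mj : Set V} (hi : IsModule G Mi) (hj : IsModule G Mj)
    (h : ¬ IsModule G (Mi ∪ Mj)) :
    ∃ u, u ∉ Mi ∧ u ∉ Mj ∧
      ((∀ a ∈ Mi, G.Adj u a) ∧ (∀ a ∈ Mj, ¬ G.Adj u a) ∨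
       (∀ a ∈ Mi, ¬ G.Adj u a) ∧ (∀ a ∈ Mj, G.Adj u a)) := by
  unfold IsModule at h
  push_neg at h
  obtain ⟨x, hxS, hnall, hnnone⟩ := h
  have hxi : x ∉ Mi := fun hh => hxS (Or.inl hh)
  have hxj : x ∉ Mj := fun hh => hxS (Or.inr hh)
  rcases hi x hxi with hi1 | hi0 <;> rcases hj x hxj with hj1 | hj0
  · obtain ⟨aa, haa, hnadj⟩ := hnall
    exact absurd (haa.elim (hi1 aa) (hj1 aa)) hnadj
  · exact ⟨x, hxi, hxj, Or.inl ⟨hi1, hj0⟩⟩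
  · exact ⟨x, hxi, hxj, Or.inr ⟨hi0, hj1⟩⟩
  · obtain ⟨aa, haa, hadj⟩ := hnnone
    exact absurd hadj (haa.elim (hi0 aa) (hj0 aa))

end Stmt2Aux

namespace Stmt2Aux

variable {V : Type*} {G : SimpleGraph V}

lemma mem_empty_ne {MA MB : Set V} (hAB : MA ∩ MB = ∅) {za zb : V}
    (hza : za ∈ MA) (hzb : zb ∈ MB) : za ≠ zb := by
  intro h
  subst h
  have : za ∈ MA ∩ MB := ⟨hza, hzb⟩
  rw [hAB] at this
  exact absurd this (Set.notMem_empty za)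

lemma notmem_of_inter_empty {MA MB : Set V} (hAB : MA ∩ MB = ∅) {z : V}
    (hz : z ∈ MA) : z ∉ MB := by
  intro h
  have : z ∈ MA ∩ MB := ⟨hz, h⟩
  rw [hAB] at this
  exact absurd this (Set.notMem_empty z)

lemma case2_finish (hF : FFree G) {x1 x2 x3 u v : V}
    (h12 : x1 ≠ x2) (h13 : x1 ≠ x3) (h23 : x2 ≠ x3)
    (hu1 : u ≠ x1) (hu2 : u ≠ x2) (hu3 : u ≠ x3)
    (hv1 : v ≠ x1) (hv2 : v ≠ x2) (hv3 : v ≠ x3) (huv : u ≠ v)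
    (a12 : G.Adj x1 x2) (a13 : G.Adj x1 x3) (a23 : G.Adj x2 x3)
    {s0 s1 s2 t0 t1 t2 e : Bool}
    (hs0 : G.Adj u x1 ↔ s0 = true) (hs1 : G.Adj u x2 ↔ s1 = true)
    (hs2 : G.Adj u x3 ↔ s2 = true)
    (ht0 : G.Adj v x1 ↔ t0 = true) (ht1 : G.Adj v x2 ↔ t1 = true)
    (ht2 : G.Adj v x3 ↔ t2 = true)
    (he : G.Adj u v ↔ e = true)
    (c01 : s0 ≠ s1 ∨ t0 ≠ t1) (c02 : s0 ≠ s2 ∨ t0 ≠ t2)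
    (c12 : s1 ≠ s2 ∨ t1 ≠ t2) : False := by
  have ginj := emb5_inj h12 h13 h23 hu1 hu2 hu3 hv1 hv2 hv3 huv
  have hbig := emb5_iff a12 a13 a23 hs0 hs1 hs2 ht0 ht1 ht2 he
  rcases master s0 s1 s2 t0 t1 t2 e c01 c02 c12 with h|h|h|h|h
  · exact hF.1 (transfer _ ginj hbig h)
  · exact hF.2.1 (transfer _ ginj hbig h)
  · exact hF.2.2.1 (transfer _ ginj hbig h)
  · exact hF.2.2.2.1 (transfer _ ginj hbig h)
  · exact hF.2.2.2.2 (transfer _ ginj hbig h)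

lemma case2 [Fintype V] (hconn : G.Connected) (hpre : Gᶜ.Preconnected) (hF : FFree G)
    {M1 M2 M3 : Set V}
    (h1 : IsMaximalStrongModule G M1) (h2 : IsMaximalStrongModule G M2)
    (h3 : IsMaximalStrongModule G M3)
    (ne12 : M1 ≠ M2) (ne13 : M1 ≠ M3) (ne23 : M2 ≠ M3)
    (a12 : ∀ x ∈ M1, ∀ y ∈ M2, G.Adj x y)
    (a13 : ∀ x ∈ M1, ∀ y ∈ M3, G.Adj x y)
    (a23 : ∀ x ∈ M2, ∀ y ∈ M3, G.Adj x y) : False := by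
  classical
  obtain ⟨x1, hx1⟩ := h1.2.1
  obtain ⟨x2, hx2⟩ := h2.2.1
  obtain ⟨x3, hx3⟩ := h3.2.1
  have d12 := msm_inter_empty h1 h2 ne12
  have d13 := msm_inter_empty h1 h3 ne13
  have d23 := msm_inter_empty h2 h3 ne23
  have p12 : M1 ∪ M2 ≠ Set.univ := by
    intro h
    rcases (h ▸ Set.mem_univ x3 : x3 ∈ M1 ∪ M2) with h' | h'
    · exact notmem_of_inter_empty d13 h' hx3
    · exact notmem_of_inter_empty d23 h' hx3
  have p13 : M1 ∪ M3 ≠ Set.univ := by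
    intro h
    rcases (h ▸ Set.mem_univ x2 : x2 ∈ M1 ∪ M3) with h' | h'
    · exact notmem_of_inter_empty d12 h' hx2
    · exact notmem_of_inter_empty d23 hx2 h'
  have p23 : M2 ∪ M3 ≠ Set.univ := by
    intro h
    rcases (h ▸ Set.mem_univ x1 : x1 ∈ M2 ∪ M3) with h' | h'
    · exact notmem_of_inter_empty d12 hx1 h'
    · exact notmem_of_inter_empty d13 hx1 h'
  have nm12 := union_not_module hconn hpre h1 h2.1.1 h2.2.1 d12 p12
  have nm13 := union_not_module hconn hpre h1 h3.1.1 h3.2.1 d13 p13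
  have nm23 := union_not_module hconn hpre h2 h3.1.1 h3.2.1 d23 p23
  obtain ⟨u, hu1, hu2, hu⟩ := distinguisher h1.1.1 h2.1.1 nm12
  have hu3 : u ∉ M3 := by
    intro hmem
    rcases hu with ⟨_, hnone⟩ | ⟨hnone, _⟩
    · exact hnone x2 hx2 ((a23 x2 hx2 u hmem).symm)
    · exact hnone x1 hx1 ((a13 x1 hx1 u hmem).symm)
  have hne01 : decide (G.Adj u x1) ≠ decide (G.Adj u x2) := by
    rcases hu with ⟨ha1, hn2⟩ | ⟨hn1, ha2⟩
    · simp [decide_eq_true (ha1 x1 hx1), decide_eq_false (hn2 x2 hx2)]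
    · simp [decide_eq_false (hn1 x1 hx1), decide_eq_true (ha2 x2 hx2)]
  have nex12 : x1 ≠ x2 := mem_empty_ne d12 hx1 hx2
  have nex13 : x1 ≠ x3 := mem_empty_ne d13 hx1 hx3
  have nex23 : x2 ≠ x3 := mem_empty_ne d23 hx2 hx3
  have hiffgen : ∀ (p : Prop), p ↔ decide p = true := by
    intro p; simp
  have hune : ∀ {z : V} (_ : z ∉ M1) (_ : z ∉ M2) (_ : z ∉ M3),
      z ≠ x1 ∧ z ≠ x2 ∧ z ≠ x3 := by
    intro z hz1 hz2 hz3
    refine ⟨?_, ?_, ?_⟩ <;> intro h <;> subst h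
    · exact hz1 hx1
    · exact hz2 hx2
    · exact hz3 hx3
  obtain ⟨hux1, hux2, hux3⟩ := hune hu1 hu2 hu3
  by_cases h02 : decide (G.Adj u x1) = decide (G.Adj u x3)
  · obtain ⟨v, hv1, hv3, hv⟩ := distinguisher h1.1.1 h3.1.1 nm13
    have hv2 : v ∉ M2 := by
      intro hmem
      rcases hv with ⟨_, hnone⟩ | ⟨hnone, _⟩
      · exact hnone x3 hx3 (a23 v hmem x3 hx3)
      · exact hnone x1 hx1 ((a12 x1 hx1 v hmem).symm)
    obtain ⟨hvx1, hvx2, hvx3⟩ := hune hv1 hv2 hv3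
    have ht02 : decide (G.Adj v x1) ≠ decide (G.Adj v x3) := by
      rcases hv with ⟨ha1, hn3⟩ | ⟨hn1, ha3⟩
      · simp [decide_eq_true (ha1 x1 hx1), decide_eq_false (hn3 x3 hx3)]
      · simp [decide_eq_false (hn1 x1 hx1), decide_eq_true (ha3 x3 hx3)]
    have huv : u ≠ v := by
      intro h
      rw [h] at h02
      exact ht02 h02
    exact case2_finish hF nex12 nex13 nex23 hux1 hux2 hux3 hvx1 hvx2 hvx3 huv
      (a12 x1 hx1 x2 hx2) (a13 x1 hx1 x3 hx3) (a23 x2 hx2 x3 hx3)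
      (hiffgen _) (hiffgen _) (hiffgen _) (hiffgen _) (hiffgen _) (hiffgen _) (hiffgen _)
      (Or.inl hne01) (Or.inr ht02)
      (Or.inl fun h => hne01 (h02.trans h.symm))
  · obtain ⟨v, hv2, hv3, hv⟩ := distinguisher h2.1.1 h3.1.1 nm23
    have hv1 : v ∉ M1 := by
      intro hmem
      rcases hv with ⟨_, hnone⟩ | ⟨hnone, _⟩
      · exact hnone x3 hx3 (a13 v hmem x3 hx3)
      · exact hnone x2 hx2 (a12 v hmem x2 hx2)
    obtain ⟨hvx1, hvx2, hvx3⟩ := hune hv1 hv2 hv3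
    have ht12 : decide (G.Adj v x2) ≠ decide (G.Adj v x3) := by
      rcases hv with ⟨ha2, hn3⟩ | ⟨hn2, ha3⟩
      · simp [decide_eq_true (ha2 x2 hx2), decide_eq_false (hn3 x3 hx3)]
      · simp [decide_eq_false (hn2 x2 hx2), decide_eq_true (ha3 x3 hx3)]
    have boolfact : ∀ a b c : Bool, a ≠ b → a ≠ c → b = c := by decide
    have hs12 : decide (G.Adj u x2) = decide (G.Adj u x3) :=
      boolfact _ _ _ hne01 h02
    have huv : u ≠ v := by
      intro h
      rw [h] at hs12
      exact ht12 hs12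
    exact case2_finish hF nex12 nex13 nex23 hux1 hux2 hux3 hvx1 hvx2 hvx3 huv
      (a12 x1 hx1 x2 hx2) (a13 x1 hx1 x3 hx3) (a23 x2 hx2 x3 hx3)
      (hiffgen _) (hiffgen _) (hiffgen _) (hiffgen _) (hiffgen _) (hiffgen _) (hiffgen _)
      (Or.inl hne01) (Or.inl h02) (Or.inr ht12)

end Stmt2Aux

namespace Stmt2Aux

variable {V : Type*} {G : SimpleGraph V}

/-- The decomposition that `hnp` forbids. -/
def NicePart (G : SimpleGraph V) : Prop :=
  ∃ U C1 C2 : Set V,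
    Disjoint U C1 ∧ Disjoint U C2 ∧ Disjoint C1 C2 ∧ U ∪ C1 ∪ C2 = Set.univ ∧
    (∀ u ∈ U, ∀ v : V, v ≠ u → G.Adj u v) ∧
    G.IsClique C1 ∧ G.IsClique C2 ∧ (∀ a ∈ C1, ∀ b ∈ C2, ¬ G.Adj a b)

lemma ne_of_mem_notmem {K : Set V} {x y : V} (hx : x ∈ K) (hy : y ∉ K) : x ≠ y :=
  fun h => hy (h ▸ hx)

def c4m : Fin 4 → Fin 4 → Bool :=
  ![![false,true,false,true],![true,false,true,false],
    ![false,true,false,true],![true,false,true,false]]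

def emb4 {V : Type*} (p q r s : V) : Fin 4 → V := fun i =>
  if i = 0 then p else if i = 1 then q else if i = 2 then r else s

lemma c4_free (hC4 : ¬ HasInducedCopy GraphC4 G) {p q r s : V}
    (hpq : G.Adj p q) (hqr : G.Adj q r) (hrs : G.Adj r s) (hps : G.Adj p s)
    (hpr : ¬ G.Adj p r) (hqs : ¬ G.Adj q s) (hpr' : p ≠ r) (hqs' : q ≠ s) : False := by
  have hloop : ∀ w : V, ¬ G.Adj w w := fun w => G.loopless.irrefl w
  have h1 := hpq.symm; have h2 := hqr.symm; have h3 := hrs.symm; have h4 := hps.symm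
  have n1 : ¬ G.Adj r p := fun h => hpr h.symm
  have n2 : ¬ G.Adj s q := fun h => hqs h.symm
  have e1 : p ≠ q := hpq.ne
  have e2 : q ≠ r := hqr.ne
  have e3 : r ≠ s := hrs.ne
  have e4 : p ≠ s := hps.ne
  have ginj : Function.Injective (emb4 p q r s) := by
    intro i j hij
    fin_cases i <;> fin_cases j <;> simp_all [emb4]
  have hbig : ∀ i j : Fin 4, G.Adj (emb4 p q r s i) (emb4 p q r s j) ↔ c4m i j = true := by
    intro i j
    fin_cases i <;> fin_cases j <;> simp_all [emb4, c4m]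
  exact hC4 (transfer _ ginj hbig ⟨![0,1,2,3], by decide, by decide⟩)

lemma copy_dart : copyB (mAdj true false false true false true false) GraphDart :=
  ⟨![0,1,2,3,4], by decide, by decide⟩

lemma copy_gem : copyB (mAdj true false true false true true false) GraphGem :=
  ⟨![3,0,1,4,2], by decide, by decide⟩

lemma copy_fox : copyB (mAdj true true false true true false false) GraphFox :=
  ⟨![0,1,2,3,4], by decide, by decide⟩

lemma iff_true_bool {p : Prop} (h : p) : p ↔ (true = true) := iff_of_true h rfl
lemma iff_false_bool {p : Prop} (h : ¬ p) : p ↔ (false = true) := iff_of_false h (by decide)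

lemma case1_engine (hF : FFree G) (hnp : ¬ NicePart G) (K : Set V)
    (hout : ∀ x, x ∉ K → ∀ a ∈ K, G.Adj x a)
    (hKmin : ∀ b ∈ K, (∀ y, y ≠ b → G.Adj b y) → False)
    {u0 u0' : V} (hu0 : u0 ∈ K) (hu0' : u0' ∈ K) (hne0 : u0 ≠ u0')
    (hnadj0 : ¬ G.Adj u0 u0')
    {w2 w3 : V} (hw2 : w2 ∉ K) (hw3 : w3 ∉ K) (hw23 : w2 ≠ w3) : False := by
  have haw23 : G.Adj w2 w3 := by
    by_contra hn
    exact c4_free hF.1 (hout w2 hw2 u0 hu0) ((hout w3 hw3 u0 hu0).symm)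
      (hout w3 hw3 u0' hu0') (hout w2 hw2 u0' hu0') hn hnadj0 hw23 hne0
  have p3free : ∀ a ∈ K, ∀ b ∈ K, ∀ c ∈ K,
      G.Adj a b → G.Adj b c → a ≠ c → G.Adj a c := by
    intro a ha b hb c hc hab hbc hac'
    by_contra hac
    have hDb : ∀ d ∈ K, d ≠ a → d ≠ b → d ≠ c → G.Adj d b := by
      intro d hd hda' hdb' hdc'
      by_contra hdb
      have hnca : ¬ G.Adj c a := fun h => hac h.symm
      by_cases hda : G.Adj d a <;> by_cases hdc : G.Adj d c
      · -- C4 : a - d - c - b - a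
        exact c4_free hF.1 hda.symm hdc hbc.symm hab hac hdb hac' hdb'
      · -- GEM : triangle (a, b, w2), u := d bits (1,0,1), v := c bits (0,1,1), e = 0
        have ginj := emb5_inj hab.ne (ne_of_mem_notmem ha hw2) (ne_of_mem_notmem hb hw2)
          hda' hdb' (ne_of_mem_notmem hd hw2) (Ne.symm hac') (hbc.ne).symm
          (ne_of_mem_notmem hc hw2) hdc'
        have hbig := emb5_iff (G := G) hab ((hout w2 hw2 a ha).symm) ((hout w2 hw2 b hb).symm)
          (iff_true_bool hda) (iff_false_bool hdb)
          (iff_true_bool ((hout w2 hw2 d hd).symm))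
          (iff_false_bool hnca) (iff_true_bool hbc.symm)
          (iff_true_bool ((hout w2 hw2 c hc).symm))
          (iff_false_bool hdc)
        exact hF.2.2.2.2 (transfer _ ginj hbig copy_gem)
      · -- GEM sym : triangle (c, b, w2), u := d bits (1,0,1), v := a bits (0,1,1), e = 0
        have ginj := emb5_inj (hbc.ne).symm (ne_of_mem_notmem hc hw2) (ne_of_mem_notmem hb hw2)
          hdc' hdb' (ne_of_mem_notmem hd hw2) hac' hab.ne
          (ne_of_mem_notmem ha hw2) hda'
        have hbig := emb5_iff (G := G) hbc.symm ((hout w2 hw2 c hc).symm) ((hout w2 hw2 b hb).symm)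
          (iff_true_bool hdc) (iff_false_bool hdb)
          (iff_true_bool ((hout w2 hw2 d hd).symm))
          (iff_false_bool hac) (iff_true_bool hab)
          (iff_true_bool ((hout w2 hw2 a ha).symm))
          (iff_false_bool hda)
        exact hF.2.2.2.2 (transfer _ ginj hbig copy_gem)
      · -- DART : triangle (w2, a, b), u := d bits (1,0,0), v := c bits (1,0,1), e = 0
        have ginj := emb5_inj (Ne.symm (ne_of_mem_notmem ha hw2))
          (Ne.symm (ne_of_mem_notmem hb hw2)) hab.ne
          (ne_of_mem_notmem hd hw2) hda' hdb'
          (ne_of_mem_notmem hc hw2) (Ne.symm hac') (hbc.ne).symm hdc'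
        have hbig := emb5_iff (G := G) (hout w2 hw2 a ha) (hout w2 hw2 b hb) hab
          (iff_true_bool ((hout w2 hw2 d hd).symm)) (iff_false_bool hda)
          (iff_false_bool hdb)
          (iff_true_bool ((hout w2 hw2 c hc).symm)) (iff_false_bool hnca)
          (iff_true_bool hbc.symm)
          (iff_false_bool hdc)
        exact hF.2.2.1 (transfer _ ginj hbig copy_dart)
    have huniv : ∀ y, y ≠ b → G.Adj b y := by
      intro y hy
      by_cases hyK : y ∈ K
      · by_cases hya : y = a
        · subst hya; exact hab.symm
        · by_cases hyc : y = c
          · subst hyc; exact hbc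
          · exact (hDb y hyK hya hy hyc).symm
      · exact (hout y hyK b hb).symm
    exact hKmin b hb huniv
  have hC1cl : G.IsClique {z | z ∈ K ∧ (z = u0 ∨ G.Adj u0 z)} := by
    intro z hz w hw hzw
    rcases hz.2 with hzu | hz2
    · rcases hw.2 with hwu | hw2'
      · exact absurd (hzu.trans hwu.symm) hzw
      · subst hzu; exact hw2'
    · rcases hw.2 with hwu | hw2'
      · subst hwu; exact hz2.symm
      · exact p3free z hz.1 u0 hu0 w hw.1 hz2.symm hw2' hzw
  have hC2cl : G.IsClique {z | z ∈ K ∧ ¬(z = u0 ∨ G.Adj u0 z)} := by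
    intro z hz w hw hzw
    by_contra hnzw
    -- FOX : triangle (w2, w3, u0), u := z bits (1,1,0), v := w bits (1,1,0), e = 0
    have hzu0 : z ≠ u0 := fun h => hz.2 (Or.inl h)
    have hwu0 : w ≠ u0 := fun h => hw.2 (Or.inl h)
    have hznu0 : ¬ G.Adj z u0 := fun h => hz.2 (Or.inr h.symm)
    have hwnu0 : ¬ G.Adj w u0 := fun h => hw.2 (Or.inr h.symm)
    have ginj := emb5_inj hw23 (Ne.symm (ne_of_mem_notmem hu0 hw2))
      (Ne.symm (ne_of_mem_notmem hu0 hw3))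
      (ne_of_mem_notmem hz.1 hw2) (ne_of_mem_notmem hz.1 hw3) hzu0
      (ne_of_mem_notmem hw.1 hw2) (ne_of_mem_notmem hw.1 hw3) hwu0 hzw
    have hbig := emb5_iff (G := G) haw23 (hout w2 hw2 u0 hu0) (hout w3 hw3 u0 hu0)
      (iff_true_bool ((hout w2 hw2 z hz.1).symm))
      (iff_true_bool ((hout w3 hw3 z hz.1).symm))
      (iff_false_bool hznu0)
      (iff_true_bool ((hout w2 hw2 w hw.1).symm))
      (iff_true_bool ((hout w3 hw3 w hw.1).symm))
      (iff_false_bool hwnu0)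
      (iff_false_bool hnzw)
    exact hF.2.2.2.1 (transfer _ ginj hbig copy_fox)
  have hcross : ∀ a ∈ {z | z ∈ K ∧ (z = u0 ∨ G.Adj u0 z)},
      ∀ b ∈ {z | z ∈ K ∧ ¬(z = u0 ∨ G.Adj u0 z)}, ¬ G.Adj a b := by
    intro a ha b hb hadj
    rcases ha.2 with hau | ha2
    · subst hau; exact hb.2 (Or.inr hadj)
    · by_cases hbu : b = u0
      · exact hb.2 (Or.inl hbu)
      · exact hb.2 (Or.inr (p3free u0 hu0 a ha.1 b hb.1 ha2 hadj (fun h => hbu h.symm)))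
  refine hnp ⟨Kᶜ, {z | z ∈ K ∧ (z = u0 ∨ G.Adj u0 z)},
    {z | z ∈ K ∧ ¬(z = u0 ∨ G.Adj u0 z)}, ?_, ?_, ?_, ?_, ?_, hC1cl, hC2cl, hcross⟩
  · rw [Set.disjoint_left]; intro x hx hx1; exact hx hx1.1
  · rw [Set.disjoint_left]; intro x hx hx2; exact hx hx2.1
  · rw [Set.disjoint_left]; intro x hx1 hx2; exact hx2.2 hx1.2
  · ext x
    simp only [Set.mem_union, Set.mem_univ, iff_true, Set.mem_compl_iff, Set.mem_setOf_eq]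
    by_cases hxK : x ∈ K
    · by_cases hx0 : x = u0 ∨ G.Adj u0 x
      · exact Or.inl (Or.inr ⟨hxK, hx0⟩)
      · exact Or.inr ⟨hxK, hx0⟩
    · exact Or.inl (Or.inl hxK)
  · intro u hu y hy
    by_cases hyK : y ∈ K
    · exact hout u hu y hyK
    · by_cases hadj : G.Adj u y
      · exact hadj
      · exact (c4_free hF.1 (hout u hu u0 hu0) ((hout y hyK u0 hu0).symm)
          (hout y hyK u0' hu0') (hout u hu u0' hu0') hadj hnadj0 (Ne.symm hy) hne0).elim

end Stmt2Aux

namespace Stmt2Aux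

variable {V : Type*} {G : SimpleGraph V}

lemma case1 (hF : FFree G) (hnp : ¬ NicePart G) (hnc : ¬ G.IsClique (Set.univ : Set V))
    (hnpre : ¬ Gᶜ.Preconnected)
    {M1 M2 M3 : Set V}
    (h1 : IsMaximalStrongModule G M1) (h2 : IsMaximalStrongModule G M2)
    (h3 : IsMaximalStrongModule G M3)
    (ne12 : M1 ≠ M2) (ne13 : M1 ≠ M3) (ne23 : M2 ≠ M3) : False := by
  have hex : ∃ p q : V, p ≠ q ∧ ¬ G.Adj p q := by
    by_contra h
    push_neg at h
    exact hnc fun x _ y _ hxy => h x y hxy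
  obtain ⟨u0, u0', hne0, hnadj0⟩ := hex
  set K : Set V := {z | Gᶜ.Reachable u0 z} with hKdef
  have hu0K : u0 ∈ K := SimpleGraph.Reachable.refl u0
  have hu0'K : u0' ∈ K :=
    (((SimpleGraph.compl_adj G u0 u0').mpr ⟨hne0, hnadj0⟩)).reachable
  have hclosed : ∀ {p q : V}, p ∈ K → Gᶜ.Reachable p q → q ∈ K := by
    intro p q hp hpq
    exact (hp : Gᶜ.Reachable u0 p).trans hpq
  have hout : ∀ x, x ∉ K → ∀ a ∈ K, G.Adj x a := by
    intro x hx a ha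
    have hne : a ≠ x := ne_of_mem_notmem ha hx
    by_contra hadj
    have hca : Gᶜ.Adj a x := (SimpleGraph.compl_adj G a x).mpr ⟨hne, fun h => hadj h.symm⟩
    exact hx (hclosed ha hca.reachable)
  have hKuniv : K ≠ Set.univ := by
    intro h
    apply hnpre
    intro xx yy
    have hxx : xx ∈ K := h ▸ Set.mem_univ xx
    have hyy : yy ∈ K := h ▸ Set.mem_univ yy
    exact (hxx : Gᶜ.Reachable u0 xx).symm.trans hyy
  have hKmin : ∀ b ∈ K, (∀ y, y ≠ b → G.Adj b y) → False := by
    intro b hb huniv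
    obtain ⟨c, hc, hcb⟩ : ∃ c, c ∈ K ∧ c ≠ b := by
      by_cases h : b = u0
      · subst h; exact ⟨u0', hu0'K, Ne.symm hne0⟩
      · exact ⟨u0, hu0K, fun hh => h hh.symm⟩
    obtain ⟨w⟩ : Gᶜ.Reachable b c := (hb : Gᶜ.Reachable u0 b).symm.trans hc
    cases w with
    | nil => exact hcb rfl
    | cons hadj p =>
      rcases (SimpleGraph.compl_adj G _ _).mp hadj with ⟨hne, hnadj⟩
      exact hnadj (huniv _ (Ne.symm hne))
  have hKmod : IsModule G K := fun x hx => Or.inl (fun a ha => hout x hx a ha)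
  have hKstrong : ∀ M' : Set V, IsModule G M' → (K ∩ M').Nonempty → K ⊆ M' ∨ M' ⊆ K := by
    intro M' hM' hne'
    obtain ⟨a, haK, haM⟩ := hne'
    by_cases hMK : M' ⊆ K
    · exact Or.inr hMK
    · left
      obtain ⟨b, hbM, hbK⟩ := Set.not_subset.mp hMK
      intro c hcK
      have hstep : ∀ p q, p ∈ K ∩ M' → Gᶜ.Adj p q → q ∈ K ∩ M' := by
        intro p q hp hpq
        have hqK : q ∈ K := hclosed hp.1 hpq.reachable
        refine ⟨hqK, ?_⟩
        by_contra hqM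
        rcases (SimpleGraph.compl_adj G p q).mp hpq with ⟨hne, hnadj⟩
        rcases hM' q hqM with hall | hnone
        · exact hnadj ((hall p hp.2).symm)
        · exact hnone b hbM ((hout b hbK q hqK).symm)
      obtain ⟨w⟩ : Gᶜ.Reachable a c := (haK : Gᶜ.Reachable u0 a).symm.trans hcK
      exact (walk_stay hstep w ⟨haK, haM⟩).2
  have pairmeet : ∀ {Ma Mb : Set V}, IsMaximalStrongModule G Ma →
      IsMaximalStrongModule G Mb → Ma ∩ Mb = ∅ →
      (Ma ∩ K).Nonempty → (Mb ∩ K).Nonempty → False := by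
    intro Ma Mb hma hmb hdisj hma' hmb'
    have hca : Ma ⊆ K ∨ K ⊆ Ma := hma.1.2 K hKmod hma'
    have hcb : Mb ⊆ K ∨ K ⊆ Mb := hmb.1.2 K hKmod hmb'
    rcases hca with hca | hca <;> rcases hcb with hcb | hcb
    · have hnea : Ma ≠ K := by
        intro h
        obtain ⟨z, hz1, hz2⟩ := hmb'
        exact notmem_of_inter_empty hdisj (by rw [h]; exact hz2) hz1
      exact hKuniv (hma.2.2.2 K ⟨hKmod, hKstrong⟩ (hca.ssubset_of_ne hnea))
    · obtain ⟨z, hz1, _⟩ := hma'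
      exact notmem_of_inter_empty hdisj hz1 (hcb (hca hz1))
    · obtain ⟨z, hz1, _⟩ := hmb'
      exact notmem_of_inter_empty hdisj (hca (hcb hz1)) hz1
    · exact notmem_of_inter_empty hdisj (hca hu0K) (hcb hu0K)
  obtain ⟨x1, hx1⟩ := h1.2.1
  obtain ⟨x2, hx2⟩ := h2.2.1
  obtain ⟨x3, hx3⟩ := h3.2.1
  have d12 := msm_inter_empty h1 h2 ne12
  have d13 := msm_inter_empty h1 h3 ne13
  have d23 := msm_inter_empty h2 h3 ne23
  by_cases hm1 : (M1 ∩ K).Nonempty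
  · by_cases hm2 : (M2 ∩ K).Nonempty
    · exact pairmeet h1 h2 d12 hm1 hm2
    · by_cases hm3 : (M3 ∩ K).Nonempty
      · exact pairmeet h1 h3 d13 hm1 hm3
      · exact case1_engine hF hnp K hout hKmin hu0K hu0'K hne0 hnadj0
          (fun h => hm2 ⟨x2, hx2, h⟩) (fun h => hm3 ⟨x3, hx3, h⟩)
          (mem_empty_ne d23 hx2 hx3)
  · by_cases hm2 : (M2 ∩ K).Nonempty
    · by_cases hm3 : (M3 ∩ K).Nonempty
      · exact pairmeet h2 h3 d23 hm2 hm3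
      · exact case1_engine hF hnp K hout hKmin hu0K hu0'K hne0 hnadj0
          (fun h => hm1 ⟨x1, hx1, h⟩) (fun h => hm3 ⟨x3, hx3, h⟩)
          (mem_empty_ne d13 hx1 hx3)
    · exact case1_engine hF hnp K hout hKmin hu0K hu0'K hne0 hnadj0
        (fun h => hm1 ⟨x1, hx1, h⟩) (fun h => hm2 ⟨x2, hx2, h⟩)
        (mem_empty_ne d12 hx1 hx2)

end Stmt2Aux

/-- For a connected F-free graph that is not a clique and does not
decompose into universal vertices plus two disjoint cliques, the quotient graph
Q̃(G) is triangle-free. -/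
theorem stmt_2 {V : Type*} [Fintype V] (G : SimpleGraph V) (hconn : G.Connected)
    (hF : FFree G) (hnc : ¬ G.IsClique (Set.univ : Set V))
    (hnp : ¬ ∃ U C1 C2 : Set V,
      Disjoint U C1 ∧ Disjoint U C2 ∧ Disjoint C1 C2 ∧ U ∪ C1 ∪ C2 = Set.univ ∧
      (∀ u ∈ U, ∀ v : V, v ≠ u → G.Adj u v) ∧
      G.IsClique C1 ∧ G.IsClique C2 ∧ (∀ a ∈ C1, ∀ b ∈ C2, ¬ G.Adj a b)) :
    (QuotientGraph G).CliqueFree 3 := by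
  classical
  intro t ht
  obtain ⟨a, b, c, hab, hac, hbc, hteq⟩ := Finset.card_eq_three.mp ht.2
  have hcl := ht.1
  rw [hteq] at hcl
  have hA1 : (QuotientGraph G).Adj a b := hcl (by simp) (by simp) hab
  have hA2 : (QuotientGraph G).Adj a c := hcl (by simp) (by simp) hac
  have hA3 : (QuotientGraph G).Adj b c := hcl (by simp) (by simp) hbc
  have hM1 : IsMaximalStrongModule G (a : Set V) := a.2
  have hM2 : IsMaximalStrongModule G (b : Set V) := b.2
  have hM3 : IsMaximalStrongModule G (c : Set V) := c.2
  have ne12 : (a : Set V) ≠ (b : Set V) := fun h => hab (Subtype.ext h)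
  have ne13 : (a : Set V) ≠ (c : Set V) := fun h => hac (Subtype.ext h)
  have ne23 : (b : Set V) ≠ (c : Set V) := fun h => hbc (Subtype.ext h)
  have a12 : ∀ x ∈ (a : Set V), ∀ y ∈ (b : Set V), G.Adj x y := hA1.2
  have a13 : ∀ x ∈ (a : Set V), ∀ y ∈ (c : Set V), G.Adj x y := hA2.2
  have a23 : ∀ x ∈ (b : Set V), ∀ y ∈ (c : Set V), G.Adj x y := hA3.2
  have hnp' : ¬ Stmt2Aux.NicePart G := hnp
  by_cases hpre : Gᶜ.Preconnected
  · exact Stmt2Aux.case2 hconn hpre hF hM1 hM2 hM3 ne12 ne13 ne23 a12 a13 a23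
  · exact Stmt2Aux.case1 hF hnp' hnc hpre hM1 hM2 hM3 ne12 ne13 ne23
end

section
/- Let G be a connected F-free finite simple graph that is not a clique, and suppose V(G) admits no partition into three sets U, C1, C2 such that every vertex of U is adjacent to all other vertices of G, C1 and C2 both induce cliques, and there is no edge between C1 and C2. Then every maximal strong module M of G induces a cluster graph, i.e., every connected component of the subgraph G[M] is a clique. -/
open SimpleGraph

instance : DecidableRel GraphC4.Adj := fun _ _ =>
  decidable_of_iff _ (SimpleGraph.fromRel_adj _ _ _).symm
instance : DecidableRel GraphDart.Adj := fun _ _ =>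
  decidable_of_iff _ (SimpleGraph.fromRel_adj _ _ _).symm
instance : DecidableRel GraphGem.Adj := fun _ _ =>
  decidable_of_iff _ (SimpleGraph.fromRel_adj _ _ _).symm
instance : DecidableRel GraphFox.Adj := fun _ _ =>
  decidable_of_iff _ (SimpleGraph.fromRel_adj _ _ _).symm

lemma inj4 {V : Type*} {v0 v1 v2 v3 : V} (h01 : v0 ≠ v1) (h02 : v0 ≠ v2) (h03 : v0 ≠ v3)
    (h12 : v1 ≠ v2) (h13 : v1 ≠ v3) (h23 : v2 ≠ v3) :
    Function.Injective ![v0, v1, v2, v3] := by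
  intro i j hij
  fin_cases i <;> fin_cases j <;> simp_all

lemma inj5 {V : Type*} {v0 v1 v2 v3 v4 : V} (h01 : v0 ≠ v1) (h02 : v0 ≠ v2) (h03 : v0 ≠ v3)
    (h04 : v0 ≠ v4) (h12 : v1 ≠ v2) (h13 : v1 ≠ v3) (h14 : v1 ≠ v4) (h23 : v2 ≠ v3)
    (h24 : v2 ≠ v4) (h34 : v3 ≠ v4) :
    Function.Injective ![v0, v1, v2, v3, v4] := by
  intro i j hij
  fin_cases i <;> fin_cases j <;> simp_all

/-- Under the same hypotheses, every maximal strong module induces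
a cluster graph (no induced `P₃` inside the module). -/
theorem stmt_3 {V : Type*} [Fintype V] (G : SimpleGraph V) (hconn : G.Connected)
    (hF : FFree G) (hnc : ¬ G.IsClique (Set.univ : Set V))
    (hnp : ¬ ∃ U C1 C2 : Set V,
      Disjoint U C1 ∧ Disjoint U C2 ∧ Disjoint C1 C2 ∧ U ∪ C1 ∪ C2 = Set.univ ∧
      (∀ u ∈ U, ∀ v : V, v ≠ u → G.Adj u v) ∧
      G.IsClique C1 ∧ G.IsClique C2 ∧ (∀ a ∈ C1, ∀ b ∈ C2, ¬ G.Adj a b)) :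
    ∀ M : Set V, IsMaximalStrongModule G M →
      ∀ a ∈ M, ∀ b ∈ M, ∀ c ∈ M, G.Adj a b → G.Adj b c → a ≠ c → G.Adj a c := by
  obtain ⟨hC4f, hbullf, hdartf, hfoxf, hgemf⟩ := hF
  intro M hM a ha b hb c hc hab hbc hac
  by_contra hnac
  obtain ⟨⟨hmod, _⟩, _, hMne, _⟩ := hM
  -- there is a vertex outside M
  have hex : ∃ x, x ∉ M := by
    by_contra h
    push_neg at h
    exact hMne (Set.eq_univ_of_forall h)
  -- a walk leaving M yields a vertex outside M with a neighbor in M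
  have hexit : ∀ (u v : V) (w : G.Walk u v), u ∈ M → v ∉ M →
      ∃ x, x ∉ M ∧ ∃ m ∈ M, G.Adj x m := by
    intro u v w
    induction w with
    | nil => exact fun h1 h2 => absurd h1 h2
    | @cons u u' v h p ih =>
      intro hu hv
      by_cases hu' : u' ∈ M
      · exact ih hu' hv
      · exact ⟨u', hu', u, hu, h.symm⟩
  obtain ⟨x0, hx0⟩ := hex
  obtain ⟨n, hnM, m0, hm0, hnm0⟩ :=
    hexit a x0 (hconn.preconnected a x0).some ha hx0
  have hn : ∀ m ∈ M, G.Adj n m := by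
    rcases hmod n hnM with h | h
    · exact h
    · exact absurd hnm0 (h m0 hm0)
  -- any two vertices outside M that are complete to M are adjacent
  have hNcl : ∀ x y, x ∉ M → y ∉ M → (∀ m ∈ M, G.Adj x m) → (∀ m ∈ M, G.Adj y m) →
      x ≠ y → G.Adj x y := by
    intro x y hxM hyM hxcom hycom hxyne
    by_contra hxy
    have d1 : x ≠ a := by rintro rfl; exact hxM ha
    have d2 : x ≠ c := by rintro rfl; exact hxM hc
    have d3 : a ≠ y := by rintro rfl; exact hyM ha
    have d4 : y ≠ c := by rintro rfl; exact hyM hc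
    refine hC4f ⟨⟨![x, a, y, c], inj4 d1 hxyne d2 d3 hac d4⟩, ?_⟩
    intro i j
    fin_cases i <;> fin_cases j
    · exact iff_of_false (G.loopless.irrefl _) (by decide)
    · exact iff_of_true (hxcom a ha) (by decide)
    · exact iff_of_false hxy (by decide)
    · exact iff_of_true (hxcom c hc) (by decide)
    · exact iff_of_true ((hxcom a ha)).symm (by decide)
    · exact iff_of_false (G.loopless.irrefl _) (by decide)
    · exact iff_of_true (hycom a ha).symm (by decide)
    · exact iff_of_false hnac (by decide)
    · exact iff_of_false (fun hh => hxy hh.symm) (by decide)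
    · exact iff_of_true ((hycom a ha).symm).symm (by decide)
    · exact iff_of_false (G.loopless.irrefl _) (by decide)
    · exact iff_of_true (hycom c hc) (by decide)
    · exact iff_of_true ((hxcom c hc)).symm (by decide)
    · exact iff_of_false (fun hh => hnac hh.symm) (by decide)
    · exact iff_of_true ((hycom c hc)).symm (by decide)
    · exact iff_of_false (G.loopless.irrefl _) (by decide)
  -- vertices anticomplete to M have all their neighbors anticomplete to M
  have hanti : ∀ x y, x ∉ M → (∀ m ∈ M, ¬ G.Adj x m) → G.Adj x y →
      y ∉ M ∧ ∀ m ∈ M, ¬ G.Adj y m := by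
    intro x y hxM hxanti hxy
    have hyM : y ∉ M := fun hy => hxanti y hy hxy
    refine ⟨hyM, ?_⟩
    rcases hmod y hyM with hycom | h
    · exfalso
      have d01 : y ≠ a := by rintro rfl; exact hyM ha
      have d02 : y ≠ b := by rintro rfl; exact hyM hb
      have d03 : y ≠ x := fun h => G.loopless.irrefl x (h ▸ hxy)
      have d04 : y ≠ c := by rintro rfl; exact hyM hc
      have d13 : a ≠ x := by rintro rfl; exact hxM ha
      have d23 : b ≠ x := by rintro rfl; exact hxM hb
      have d34 : x ≠ c := by rintro rfl; exact hxM hc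
      refine hdartf ⟨⟨![y, a, b, x, c], inj5 d01 d02 d03 d04 hab.ne d13 hac d23 hbc.ne d34⟩, ?_⟩
      intro i j
      fin_cases i <;> fin_cases j
      · exact iff_of_false (G.loopless.irrefl _) (by decide)
      · exact iff_of_true (hycom a ha) (by decide)
      · exact iff_of_true (hycom b hb) (by decide)
      · exact iff_of_true hxy.symm (by decide)
      · exact iff_of_true (hycom c hc) (by decide)
      · exact iff_of_true ((hycom a ha)).symm (by decide)
      · exact iff_of_false (G.loopless.irrefl _) (by decide)
      · exact iff_of_true hab (by decide)
      · exact iff_of_false (fun hh => hxanti a ha hh.symm) (by decide)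
      · exact iff_of_false hnac (by decide)
      · exact iff_of_true ((hycom b hb)).symm (by decide)
      · exact iff_of_true (hab).symm (by decide)
      · exact iff_of_false (G.loopless.irrefl _) (by decide)
      · exact iff_of_false (fun hh => hxanti b hb hh.symm) (by decide)
      · exact iff_of_true hbc (by decide)
      · exact iff_of_true (hxy.symm).symm (by decide)
      · exact iff_of_false (fun hh => (fun hh => hxanti a ha hh.symm) hh.symm) (by decide)
      · exact iff_of_false (fun hh => (fun hh => hxanti b hb hh.symm) hh.symm) (by decide)
      · exact iff_of_false (G.loopless.irrefl _) (by decide)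
      · exact iff_of_false (hxanti c hc) (by decide)
      · exact iff_of_true ((hycom c hc)).symm (by decide)
      · exact iff_of_false (fun hh => hnac hh.symm) (by decide)
      · exact iff_of_true (hbc).symm (by decide)
      · exact iff_of_false (fun hh => (hxanti c hc) hh.symm) (by decide)
      · exact iff_of_false (G.loopless.irrefl _) (by decide)
    · exact h
  -- no vertex is anticomplete to M (connectivity)
  have hZreach : ∀ (u v : V) (w : G.Walk u v), v ∈ M → u ∉ M →
      (∀ m ∈ M, ¬ G.Adj u m) → False := by
    intro u v w
    induction w with
    | nil => exact fun hv h1 _ => h1 hv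
    | @cons u u' v h p ih =>
      intro hv hu hu_anti
      obtain ⟨h1, h2⟩ := hanti u u' hu hu_anti h
      exact ih hv h1 h2
  have hZ : ∀ x, x ∉ M → ∀ m ∈ M, G.Adj x m := by
    intro x hxM
    rcases hmod x hxM with h | h
    · exact h
    · exact (hZreach x a (hconn.preconnected x a).some ha hxM h).elim
  -- every vertex outside M is universal
  have hout : ∀ x, x ∉ M → ∀ v, v ≠ x → G.Adj x v := by
    intro x hxM v hvx
    by_cases hvM : v ∈ M
    · exact hZ x hxM v hvM
    · exact hNcl x v hxM hvM (hZ x hxM) (hZ v hvM) (Ne.symm hvx)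
  -- key lemma: no induced P3 inside M centered at a vertex with a non-neighbor
  have key : ∀ p q r w, p ∈ M → q ∈ M → r ∈ M → G.Adj p q → G.Adj q r → p ≠ r →
      ¬ G.Adj p r → w ≠ q → ¬ G.Adj q w → False := by
    intro p q r w hp hq hr hpq hqr hprne hnpr hwq hqw
    have hwM : w ∈ M := by
      by_contra hw
      exact hqw (hZ w hw q hq).symm
    have dwp : w ≠ p := by rintro rfl; exact hqw hpq.symm
    have dwr : w ≠ r := by rintro rfl; exact hqw hqr
    have dpn : p ≠ n := by rintro rfl; exact hnM hp
    have dqn : q ≠ n := by rintro rfl; exact hnM hq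
    have drn : r ≠ n := by rintro rfl; exact hnM hr
    have dwn : w ≠ n := by rintro rfl; exact hnM hwM
    by_cases h1 : G.Adj w p <;> by_cases h2 : G.Adj w r
    · refine hC4f ⟨⟨![p, q, r, w], inj4 hpq.ne hprne dwp.symm hqr.ne hwq.symm dwr.symm⟩, ?_⟩
      intro i j
      fin_cases i <;> fin_cases j
      · exact iff_of_false (G.loopless.irrefl _) (by decide)
      · exact iff_of_true hpq (by decide)
      · exact iff_of_false hnpr (by decide)
      · exact iff_of_true h1.symm (by decide)
      · exact iff_of_true (hpq).symm (by decide)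
      · exact iff_of_false (G.loopless.irrefl _) (by decide)
      · exact iff_of_true hqr (by decide)
      · exact iff_of_false hqw (by decide)
      · exact iff_of_false (fun hh => hnpr hh.symm) (by decide)
      · exact iff_of_true (hqr).symm (by decide)
      · exact iff_of_false (G.loopless.irrefl _) (by decide)
      · exact iff_of_true h2.symm (by decide)
      · exact iff_of_true (h1.symm).symm (by decide)
      · exact iff_of_false (fun hh => hqw hh.symm) (by decide)
      · exact iff_of_true (h2.symm).symm (by decide)
      · exact iff_of_false (G.loopless.irrefl _) (by decide)
    · refine hgemf ⟨⟨![w, p, q, r, n],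
        inj5 dwp hwq dwr dwn hpq.ne hprne dpn hqr.ne dqn drn⟩, ?_⟩
      intro i j
      fin_cases i <;> fin_cases j
      · exact iff_of_false (G.loopless.irrefl _) (by decide)
      · exact iff_of_true h1 (by decide)
      · exact iff_of_false (fun hh => hqw hh.symm) (by decide)
      · exact iff_of_false h2 (by decide)
      · exact iff_of_true (hn w hwM).symm (by decide)
      · exact iff_of_true (h1).symm (by decide)
      · exact iff_of_false (G.loopless.irrefl _) (by decide)
      · exact iff_of_true hpq (by decide)
      · exact iff_of_false hnpr (by decide)
      · exact iff_of_true (hn p hp).symm (by decide)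
      · exact iff_of_false (fun hh => (fun hh => hqw hh.symm) hh.symm) (by decide)
      · exact iff_of_true (hpq).symm (by decide)
      · exact iff_of_false (G.loopless.irrefl _) (by decide)
      · exact iff_of_true hqr (by decide)
      · exact iff_of_true (hn q hq).symm (by decide)
      · exact iff_of_false (fun hh => h2 hh.symm) (by decide)
      · exact iff_of_false (fun hh => hnpr hh.symm) (by decide)
      · exact iff_of_true (hqr).symm (by decide)
      · exact iff_of_false (G.loopless.irrefl _) (by decide)
      · exact iff_of_true (hn r hr).symm (by decide)
      · exact iff_of_true ((hn w hwM).symm).symm (by decide)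
      · exact iff_of_true ((hn p hp).symm).symm (by decide)
      · exact iff_of_true ((hn q hq).symm).symm (by decide)
      · exact iff_of_true ((hn r hr).symm).symm (by decide)
      · exact iff_of_false (G.loopless.irrefl _) (by decide)
    · refine hgemf ⟨⟨![p, q, r, w, n],
        inj5 hpq.ne hprne dwp.symm dpn hqr.ne hwq.symm dqn dwr.symm drn dwn⟩, ?_⟩
      intro i j
      fin_cases i <;> fin_cases j
      · exact iff_of_false (G.loopless.irrefl _) (by decide)
      · exact iff_of_true hpq (by decide)
      · exact iff_of_false hnpr (by decide)
      · exact iff_of_false (fun hh => h1 hh.symm) (by decide)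
      · exact iff_of_true (hn p hp).symm (by decide)
      · exact iff_of_true (hpq).symm (by decide)
      · exact iff_of_false (G.loopless.irrefl _) (by decide)
      · exact iff_of_true hqr (by decide)
      · exact iff_of_false hqw (by decide)
      · exact iff_of_true (hn q hq).symm (by decide)
      · exact iff_of_false (fun hh => hnpr hh.symm) (by decide)
      · exact iff_of_true (hqr).symm (by decide)
      · exact iff_of_false (G.loopless.irrefl _) (by decide)
      · exact iff_of_true h2.symm (by decide)
      · exact iff_of_true (hn r hr).symm (by decide)
      · exact iff_of_false (fun hh => (fun hh => h1 hh.symm) hh.symm) (by decide)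
      · exact iff_of_false (fun hh => hqw hh.symm) (by decide)
      · exact iff_of_true (h2.symm).symm (by decide)
      · exact iff_of_false (G.loopless.irrefl _) (by decide)
      · exact iff_of_true (hn w hwM).symm (by decide)
      · exact iff_of_true ((hn p hp).symm).symm (by decide)
      · exact iff_of_true ((hn q hq).symm).symm (by decide)
      · exact iff_of_true ((hn r hr).symm).symm (by decide)
      · exact iff_of_true ((hn w hwM).symm).symm (by decide)
      · exact iff_of_false (G.loopless.irrefl _) (by decide)
    · refine hdartf ⟨⟨![n, p, q, w, r],
        inj5 dpn.symm dqn.symm dwn.symm drn.symm hpq.ne dwp.symm hprne hwq.symm hqr.ne dwr⟩, ?_⟩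
      intro i j
      fin_cases i <;> fin_cases j
      · exact iff_of_false (G.loopless.irrefl _) (by decide)
      · exact iff_of_true (hn p hp) (by decide)
      · exact iff_of_true (hn q hq) (by decide)
      · exact iff_of_true (hn w hwM) (by decide)
      · exact iff_of_true (hn r hr) (by decide)
      · exact iff_of_true ((hn p hp)).symm (by decide)
      · exact iff_of_false (G.loopless.irrefl _) (by decide)
      · exact iff_of_true hpq (by decide)
      · exact iff_of_false (fun hh => h1 hh.symm) (by decide)
      · exact iff_of_false hnpr (by decide)
      · exact iff_of_true ((hn q hq)).symm (by decide)
      · exact iff_of_true (hpq).symm (by decide)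
      · exact iff_of_false (G.loopless.irrefl _) (by decide)
      · exact iff_of_false hqw (by decide)
      · exact iff_of_true hqr (by decide)
      · exact iff_of_true ((hn w hwM)).symm (by decide)
      · exact iff_of_false (fun hh => (fun hh => h1 hh.symm) hh.symm) (by decide)
      · exact iff_of_false (fun hh => hqw hh.symm) (by decide)
      · exact iff_of_false (G.loopless.irrefl _) (by decide)
      · exact iff_of_false h2 (by decide)
      · exact iff_of_true ((hn r hr)).symm (by decide)
      · exact iff_of_false (fun hh => hnpr hh.symm) (by decide)
      · exact iff_of_true (hqr).symm (by decide)
      · exact iff_of_false (fun hh => h2 hh.symm) (by decide)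
      · exact iff_of_false (G.loopless.irrefl _) (by decide)
  by_cases hbU : ∀ v, v ≠ b → G.Adj b v
  · -- b is universal; build the forbidden partition
    have hfox : ∀ x y z, x ∈ M → y ∈ M → z ∈ M → x ≠ y → x ≠ z → y ≠ z →
        ¬ G.Adj x y → ¬ G.Adj x z → ¬ G.Adj y z → False := by
      intro x y z hx hy hz dxy dxz dyz hnxy hnxz hnyz
      have dxb : x ≠ b := by rintro rfl; exact hnxy (hbU y (Ne.symm dxy))
      have dyb : y ≠ b := by rintro rfl; exact hnxy ((hbU x dxy).symm)
      have dzb : z ≠ b := by rintro rfl; exact hnxz ((hbU x dxz).symm)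
      have dbn : b ≠ n := by rintro rfl; exact hnM hb
      have dnx : n ≠ x := by rintro rfl; exact hnM hx
      have dny : n ≠ y := by rintro rfl; exact hnM hy
      have dnz : n ≠ z := by rintro rfl; exact hnM hz
      have hbn : G.Adj b n := hbU n (Ne.symm dbn)
      have hbx : G.Adj b x := hbU x dxb
      have hby : G.Adj b y := hbU y dyb
      have hbz : G.Adj b z := hbU z dzb
      refine hfoxf ⟨⟨![b, n, x, y, z],
        inj5 dbn dxb.symm dyb.symm dzb.symm dnx dny dnz dxy dxz dyz⟩, ?_⟩
      intro i j
      fin_cases i <;> fin_cases j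
      · exact iff_of_false (G.loopless.irrefl _) (by decide)
      · exact iff_of_true hbn (by decide)
      · exact iff_of_true hbx (by decide)
      · exact iff_of_true hby (by decide)
      · exact iff_of_true hbz (by decide)
      · exact iff_of_true (hbn).symm (by decide)
      · exact iff_of_false (G.loopless.irrefl _) (by decide)
      · exact iff_of_true (hn x hx) (by decide)
      · exact iff_of_true (hn y hy) (by decide)
      · exact iff_of_true (hn z hz) (by decide)
      · exact iff_of_true (hbx).symm (by decide)
      · exact iff_of_true ((hn x hx)).symm (by decide)
      · exact iff_of_false (G.loopless.irrefl _) (by decide)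
      · exact iff_of_false hnxy (by decide)
      · exact iff_of_false hnxz (by decide)
      · exact iff_of_true (hby).symm (by decide)
      · exact iff_of_true ((hn y hy)).symm (by decide)
      · exact iff_of_false (fun hh => hnxy hh.symm) (by decide)
      · exact iff_of_false (G.loopless.irrefl _) (by decide)
      · exact iff_of_false hnyz (by decide)
      · exact iff_of_true (hbz).symm (by decide)
      · exact iff_of_true ((hn z hz)).symm (by decide)
      · exact iff_of_false (fun hh => hnxz hh.symm) (by decide)
      · exact iff_of_false (fun hh => hnyz hh.symm) (by decide)
      · exact iff_of_false (G.loopless.irrefl _) (by decide)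
    have hclu : ∀ p q r, ¬ (∀ w, w ≠ q → G.Adj q w) → G.Adj p q → G.Adj q r → p ≠ r →
        G.Adj p r := by
      intro p q r hq hpq hqr hpr
      by_contra hnpr
      push_neg at hq
      obtain ⟨w, hwq, hqw⟩ := hq
      have hqM : q ∈ M := by
        by_contra hqMn
        exact hqw (hout q hqMn w hwq)
      have hpM : p ∈ M := by
        by_contra hpMn
        exact hnpr (hout p hpMn r (Ne.symm hpr))
      have hrM : r ∈ M := by
        by_contra hrMn
        exact hnpr ((hout r hrMn p hpr).symm)
      exact key p q r w hpM hqM hrM hpq hqr hpr hnpr hwq hqw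
    have haU : ¬ (∀ w, w ≠ a → G.Adj a w) := fun h => hnac (h c (Ne.symm hac))
    refine hnp ⟨{u | ∀ v, v ≠ u → G.Adj u v},
      {v | ¬ (∀ w, w ≠ v → G.Adj v w) ∧ (v = a ∨ G.Adj v a)},
      {v | ¬ (∀ w, w ≠ v → G.Adj v w) ∧ v ≠ a ∧ ¬ G.Adj v a}, ?_, ?_, ?_, ?_, ?_, ?_, ?_, ?_⟩
    · exact Set.disjoint_left.mpr fun v hv hv1 => hv1.1 hv
    · exact Set.disjoint_left.mpr fun v hv hv1 => hv1.1 hv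
    · refine Set.disjoint_left.mpr fun v hv1 hv2 => ?_
      rcases hv1.2 with rfl | hva
      · exact hv2.2.1 rfl
      · exact hv2.2.2 hva
    · ext v
      simp only [Set.mem_union, Set.mem_setOf_eq, Set.mem_univ, iff_true]
      by_cases hvU : ∀ w, w ≠ v → G.Adj v w
      · exact Or.inl (Or.inl hvU)
      · by_cases hva : v = a ∨ G.Adj v a
        · exact Or.inl (Or.inr ⟨hvU, hva⟩)
        · push_neg at hva
          exact Or.inr ⟨hvU, hva.1, hva.2⟩
    · exact fun u hu v hv => hu v hv
    · intro v hv w hw hvw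
      rcases hv.2 with rfl | hva
      · rcases hw.2 with rfl | hwa
        · exact (hvw rfl).elim
        · exact hwa.symm
      · rcases hw.2 with rfl | hwa
        · exact hva
        · exact hclu v a w haU hva hwa.symm hvw
    · intro v hv w hw hvw
      by_contra hnvw
      exact hfox a v w ha
        (by by_contra hvMn; exact hv.1 (hout v hvMn)) (by by_contra hwMn; exact hw.1 (hout w hwMn))
        (Ne.symm hv.2.1) (Ne.symm hw.2.1) hvw
        (fun h => hv.2.2 h.symm) (fun h => hw.2.2 h.symm) hnvw
    · intro p hp q hq hpq
      rcases hp.2 with rfl | hpa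
      · exact hq.2.2 hpq.symm
      · exact hq.2.2 (hclu q p a hp.1 hpq.symm hpa hq.2.1)
  · -- b is not universal: direct contradiction
    push_neg at hbU
    obtain ⟨w, hwb, hbw⟩ := hbU
    exact key a b c w ha hb hc hab hbc hac hnac hwb hbw
end

section
/- Let G be a connected F-free finite simple graph that is not a clique, and suppose V(G) admits no partition into three sets U, C1, C2 such that every vertex of U is adjacent to all other vertices of G, C1 and C2 both induce cliques, and there is no edge between C1 and C2. Then every maximal strong module M of G whose induced subgraph G[M] is not a clique satisfies |N_G(M)| = 1, i.e., exactly one vertex of G outside M is adjacent to M. -/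
open SimpleGraph

lemma c4_copy {V : Type*} (G : SimpleGraph V) (a b c w : V)
    (hab : G.Adj a b) (hbc : G.Adj b c) (hcw : G.Adj c w) (haw : G.Adj a w)
    (hac : ¬ G.Adj a c) (hbw : ¬ G.Adj b w) (hac' : a ≠ c) (hbw' : b ≠ w) :
    HasInducedCopy GraphC4 G := by
  refine ⟨⟨![a,b,c,w], ?_⟩, ?_⟩
  · intro i j h
    have h1 := hab.ne; have h2 := hbc.ne; have h3 := hcw.ne; have h4 := haw.ne
    fin_cases i <;> fin_cases j <;> simp_all
  · intro i j
    fin_cases i <;> fin_cases j <;>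
      simp [GraphC4, SimpleGraph.fromRel] <;>
      first
        | exact G.irrefl
        | tauto

lemma dart_copy {V : Type*} (G : SimpleGraph V) (v0 v1 v2 v3 v4 : V)
    (h01 : G.Adj v0 v1) (h02 : G.Adj v0 v2) (h12 : G.Adj v1 v2)
    (h04 : G.Adj v0 v4) (h24 : G.Adj v2 v4) (h03 : G.Adj v0 v3)
    (n13 : ¬ G.Adj v1 v3) (n23 : ¬ G.Adj v2 v3) (n34 : ¬ G.Adj v3 v4) (n14 : ¬ G.Adj v1 v4)
    (e13 : v1 ≠ v3) (e23 : v2 ≠ v3) (e34 : v3 ≠ v4) (e14 : v1 ≠ v4) :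
    HasInducedCopy GraphDart G := by
  refine ⟨⟨![v0,v1,v2,v3,v4], ?_⟩, ?_⟩
  · intro i j h
    have h1 := h01.ne; have h2 := h02.ne; have h3 := h12.ne; have h4 := h04.ne
    have h5 := h24.ne; have h6 := h03.ne
    fin_cases i <;> fin_cases j <;> simp_all
  · intro i j
    fin_cases i <;> fin_cases j <;>
      simp [GraphDart, SimpleGraph.fromRel] <;>
      first
        | exact G.irrefl
        | tauto

lemma fox_copy {V : Type*} (G : SimpleGraph V) (v0 v1 v2 v3 v4 : V)
    (h01 : G.Adj v0 v1) (h02 : G.Adj v0 v2) (h03 : G.Adj v0 v3) (h04 : G.Adj v0 v4)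
    (h12 : G.Adj v1 v2) (h13 : G.Adj v1 v3) (h14 : G.Adj v1 v4)
    (n23 : ¬ G.Adj v2 v3) (n24 : ¬ G.Adj v2 v4) (n34 : ¬ G.Adj v3 v4)
    (e23 : v2 ≠ v3) (e24 : v2 ≠ v4) (e34 : v3 ≠ v4) :
    HasInducedCopy GraphFox G := by
  refine ⟨⟨![v0,v1,v2,v3,v4], ?_⟩, ?_⟩
  · intro i j h
    have h1 := h01.ne; have h2 := h02.ne; have h3 := h03.ne; have h4 := h04.ne
    have h5 := h12.ne; have h6 := h13.ne; have h7 := h14.ne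
    fin_cases i <;> fin_cases j <;> simp_all
  · intro i j
    fin_cases i <;> fin_cases j <;>
      simp [GraphFox, SimpleGraph.fromRel] <;>
      first
        | exact G.irrefl
        | tauto

lemma gem_copy {V : Type*} (G : SimpleGraph V) (v0 v1 v2 v3 v4 : V)
    (h01 : G.Adj v0 v1) (h12 : G.Adj v1 v2) (h23 : G.Adj v2 v3)
    (h04 : G.Adj v0 v4) (h14 : G.Adj v1 v4) (h24 : G.Adj v2 v4) (h34 : G.Adj v3 v4)
    (n02 : ¬ G.Adj v0 v2) (n03 : ¬ G.Adj v0 v3) (n13 : ¬ G.Adj v1 v3)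
    (e02 : v0 ≠ v2) (e03 : v0 ≠ v3) (e13 : v1 ≠ v3) :
    HasInducedCopy GraphGem G := by
  refine ⟨⟨![v0,v1,v2,v3,v4], ?_⟩, ?_⟩
  · intro i j h
    have h1 := h01.ne; have h2 := h12.ne; have h3 := h23.ne; have h4 := h04.ne
    have h5 := h14.ne; have h6 := h24.ne; have h7 := h34.ne
    fin_cases i <;> fin_cases j <;> simp_all
  · intro i j
    fin_cases i <;> fin_cases j <;>
      simp [GraphGem, SimpleGraph.fromRel] <;>
      first
        | exact G.irrefl
        | tauto

lemma crossing_edge {V : Type*} (G : SimpleGraph V) (S : Set V) :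
    ∀ {z0 b : V}, G.Walk z0 b → z0 ∉ S → b ∈ S →
      ∃ z, z ∉ S ∧ ∃ w ∈ S, G.Adj z w := by
  intro z0 b p
  induction p with
  | nil => intro h hb; exact absurd hb h
  | @cons u v w h q ih =>
    intro hu hw
    by_cases hv : v ∈ S
    · exact ⟨u, hu, v, hv, h⟩
    · exact ih hv hw

/-- Under the same hypotheses, every maximal strong module that
does not induce a clique has exactly one neighbor outside it. -/
theorem stmt_4 {V : Type*} [Fintype V] (G : SimpleGraph V) (hconn : G.Connected)
    (hF : FFree G) (hnc : ¬ G.IsClique (Set.univ : Set V))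
    (hnp : ¬ ∃ U C1 C2 : Set V,
      Disjoint U C1 ∧ Disjoint U C2 ∧ Disjoint C1 C2 ∧ U ∪ C1 ∪ C2 = Set.univ ∧
      (∀ u ∈ U, ∀ v : V, v ≠ u → G.Adj u v) ∧
      G.IsClique C1 ∧ G.IsClique C2 ∧ (∀ a ∈ C1, ∀ b ∈ C2, ¬ G.Adj a b)) :
    ∀ M : Set V, IsMaximalStrongModule G M → ¬ G.IsClique M →
      {v : V | v ∉ M ∧ ∃ a ∈ M, G.Adj v a}.ncard = 1 := by
  classical
  intro M hM hMnc
  obtain ⟨hSM, hMne, hMneq, _⟩ := hM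
  have hmod : IsModule G M := hSM.1
  rw [SimpleGraph.isClique_iff, Set.Pairwise] at hMnc
  push_neg at hMnc
  obtain ⟨b, hbM, d, hdM, hbd, hnbd⟩ := hMnc
  set N : Set V := {v : V | v ∉ M ∧ ∃ a ∈ M, G.Adj v a} with hNdef
  have hNfull : ∀ x ∈ N, ∀ a ∈ M, G.Adj x a := by
    intro x hx a ha
    rcases hmod x hx.1 with h | h
    · exact h a ha
    · obtain ⟨a', ha', hadj⟩ := hx.2
      exact absurd hadj (h a' ha')
  have hNne : N.Nonempty := by
    have hz : ∃ z0, z0 ∉ M := by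
      by_contra h; push_neg at h
      exact hMneq (Set.eq_univ_of_forall h)
    obtain ⟨z0, hz0⟩ := hz
    obtain ⟨p⟩ := hconn.preconnected z0 b
    obtain ⟨z, hz, w, hw, hzw⟩ := crossing_edge G M p hz0 hbM
    exact ⟨z, hz, w, hw, hzw⟩
  by_contra hN1
  have hfin : N.Finite := Set.toFinite N
  have hpos : 0 < N.ncard := (Set.ncard_pos hfin).mpr hNne
  have h2 : 1 < N.ncard := by omega
  rw [Set.one_lt_ncard_iff hfin] at h2
  obtain ⟨x, y, hxN, hyN, hxy⟩ := h2
  -- N is a clique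
  have hNclique : ∀ x' ∈ N, ∀ y' ∈ N, x' ≠ y' → G.Adj x' y' := by
    intro x' hx' y' hy' hxy'
    by_contra hnadj
    exact hF.1 (c4_copy G b x' d y' (hNfull x' hx' b hbM).symm (hNfull x' hx' d hdM)
      (hNfull y' hy' d hdM).symm (hNfull y' hy' b hbM).symm hnbd hnadj hbd hxy')
  have hznoM : ∀ z, z ∉ M → z ∉ N → ∀ a ∈ M, ¬ G.Adj z a := by
    intro z hzM hzN a ha hadj; exact hzN ⟨hzM, a, ha, hadj⟩
  -- everything is in M ∪ N
  have hall : M ∪ N = Set.univ := by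
    by_contra hne
    have hz : ∃ z0, z0 ∉ M ∪ N := by
      by_contra h; push_neg at h; exact hne (Set.eq_univ_of_forall h)
    obtain ⟨z0, hz0⟩ := hz
    obtain ⟨p⟩ := hconn.preconnected z0 b
    obtain ⟨z, hz, w, hw, hzw⟩ := crossing_edge G (M ∪ N) p hz0 (Or.inl hbM)
    have hzM : z ∉ M := fun h => hz (Or.inl h)
    have hzN : z ∉ N := fun h => hz (Or.inr h)
    have hwN : w ∈ N := by
      rcases hw with h | h
      · exact absurd (⟨hzM, w, h, hzw⟩ : z ∈ N) hzN
      · exact h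
    have hu : ∃ u ∈ N, u ≠ w := by
      by_cases h : x = w
      · exact ⟨y, hyN, by rw [← h]; exact hxy.symm⟩
      · exact ⟨x, hxN, h⟩
    obtain ⟨u, huN, huw⟩ := hu
    have hwz : G.Adj w z := hzw.symm
    have hzb : ¬ G.Adj z b := hznoM z hzM hzN b hbM
    have hzd : ¬ G.Adj z d := hznoM z hzM hzN d hdM
    have ebz : b ≠ z := fun h => hzM (by rw [← h]; exact hbM)
    have edz : d ≠ z := fun h => hzM (by rw [← h]; exact hdM)
    by_cases hu2 : G.Adj u z
    · exact hF.2.2.2.1 (fox_copy G w u b d z (hNclique w hwN u huN huw.symm)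
        (hNfull w hwN b hbM) (hNfull w hwN d hdM) hwz
        (hNfull u huN b hbM) (hNfull u huN d hdM) hu2
        hnbd (fun h => hzb h.symm) (fun h => hzd h.symm)
        hbd ebz edz)
    · exact hF.2.2.1 (dart_copy G w b u z d
        (hNfull w hwN b hbM) (hNclique w hwN u huN huw.symm)
        (hNfull u huN b hbM).symm (hNfull w hwN d hdM)
        (hNfull u huN d hdM) hwz
        (fun h => hzb h.symm) hu2 hzd hnbd
        ebz (fun h => hzN (by rw [← h]; exact huN)) (Ne.symm edz) hbd)
  -- every vertex of N is universal
  have hNuniv : ∀ u ∈ N, ∀ t, t ≠ u → G.Adj u t := by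
    intro u hu t ht
    have htm : t ∈ M ∪ N := hall ▸ Set.mem_univ t
    rcases htm with h | h
    · exact hNfull u hu t h
    · exact hNclique u hu t h (Ne.symm ht)
  set U : Set V := {v : V | ∀ t, t ≠ v → G.Adj v t} with hUdef
  have hxUm : x ∈ U := fun t ht => hNuniv x hxN t ht
  have hyUm : y ∈ U := fun t ht => hNuniv y hyN t ht
  have hxuniv : ∀ v, v ≠ x → G.Adj x v := hNuniv x hxN
  have hyuniv : ∀ v, v ≠ y → G.Adj y v := hNuniv y hyN
  have hWnex : ∀ v ∈ Uᶜ, v ≠ x := fun v hv h => hv (by rw [h]; exact hxUm)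
  have hWney : ∀ v ∈ Uᶜ, v ≠ y := fun v hv h => hv (by rw [h]; exact hyUm)
  have hWne : (Uᶜ : Set V).Nonempty := by
    by_contra h
    rw [Set.not_nonempty_iff_eq_empty, Set.compl_empty_iff] at h
    apply hnc
    intro v _ t _ hvt
    have hvU : v ∈ U := by rw [h]; exact Set.mem_univ v
    exact hvU t (Ne.symm hvt)
  -- P3 lemma
  have hP3 : ∀ a c m : V, m ∈ Uᶜ → G.Adj a m → G.Adj m c → a ≠ c → G.Adj a c := by
    intro a c m hm ham hmc hac'
    by_contra hac
    have hmnu : ∃ w, w ≠ m ∧ ¬ G.Adj m w := by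
      by_contra h; push_neg at h
      exact hm (fun t ht => h t ht)
    obtain ⟨w, hwm, hmw⟩ := hmnu
    have hax : a ≠ x := by
      intro h
      apply hac
      rw [h]
      exact hxuniv c (fun hc => hac' (h.trans hc.symm))
    have hcx : c ≠ x := by
      intro h
      apply hac
      rw [h]
      exact (hxuniv a (fun ha => hac' (ha.trans h.symm))).symm
    have hmx : m ≠ x := hWnex m hm
    have hwx : w ≠ x := by
      intro h
      apply hmw
      rw [h]
      exact (hxuniv m hmx).symm
    have hXa : G.Adj x a := hxuniv a hax
    have hXc : G.Adj x c := hxuniv c hcx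
    have hXm : G.Adj x m := hxuniv m hmx
    have hXw : G.Adj x w := hxuniv w hwx
    have hwa_ne : w ≠ a := fun h => hmw (by rw [h]; exact ham.symm)
    have hwc_ne : w ≠ c := fun h => hmw (by rw [h]; exact hmc)
    by_cases h1 : G.Adj w a <;> by_cases h2 : G.Adj w c
    · exact hF.1 (c4_copy G a m c w ham hmc h2.symm h1.symm hac hmw hac' (Ne.symm hwm))
    · exact hF.2.2.2.2 (gem_copy G w a m c x h1 ham hmc hXw.symm hXa.symm hXm.symm
        hXc.symm (fun h => hmw h.symm) h2 hac hwm hwc_ne hac')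
    · exact hF.2.2.2.2 (gem_copy G w c m a x h2 hmc.symm ham.symm hXw.symm hXc.symm
        hXm.symm hXa.symm (fun h => hmw h.symm) h1 (fun h => hac h.symm)
        hwm hwa_ne (Ne.symm hac'))
    · exact hF.2.2.1 (dart_copy G x a m w c hXa hXm ham hXc hmc hXw
        (fun h => h1 h.symm) hmw h2 hac
        (Ne.symm hwa_ne) (Ne.symm hwm) hwc_ne hac')
  obtain ⟨p, hpW⟩ := hWne
  apply hnp
  refine ⟨U, {v : V | v ∈ Uᶜ ∧ (v = p ∨ G.Adj p v)},
    {v : V | v ∈ Uᶜ ∧ ¬(v = p ∨ G.Adj p v)}, ?_, ?_, ?_, ?_, ?_, ?_, ?_, ?_⟩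
  · exact Set.disjoint_left.mpr (fun v hv hc => hc.1 hv)
  · exact Set.disjoint_left.mpr (fun v hv hc => hc.1 hv)
  · exact Set.disjoint_left.mpr (fun v hv hc => hc.2 hv.2)
  · ext v
    by_cases h : v ∈ U <;> by_cases h2 : v = p ∨ G.Adj p v <;>
      simp [Set.mem_union, h, h2] <;> tauto
  · intro u hu v hv
    exact hu v hv
  · rw [SimpleGraph.isClique_iff]
    intro v hv w hw hvw
    rcases hv.2 with hv' | hv'
    · rcases hw.2 with hw' | hw'
      · exact absurd (hv'.trans hw'.symm) hvw
      · rw [hv']; exact hw'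
    · rcases hw.2 with hw' | hw'
      · rw [hw']; exact hv'.symm
      · exact hP3 v w p hpW hv'.symm hw' hvw
  · rw [SimpleGraph.isClique_iff]
    intro v hv w hw hvw
    by_contra hnadj
    have hv1 : v ≠ p := fun h => hv.2 (Or.inl h)
    have hv2 : ¬ G.Adj p v := fun h => hv.2 (Or.inr h)
    have hw1 : w ≠ p := fun h => hw.2 (Or.inl h)
    have hw2 : ¬ G.Adj p w := fun h => hw.2 (Or.inr h)
    exact hF.2.2.2.1 (fox_copy G x y p v w (hNclique x hxN y hyN hxy)
      (hxuniv p (hWnex p hpW)) (hxuniv v (hWnex v hv.1)) (hxuniv w (hWnex w hw.1))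
      (hyuniv p (hWney p hpW)) (hyuniv v (hWney v hv.1)) (hyuniv w (hWney w hw.1))
      hv2 hw2 hnadj (Ne.symm hv1) (Ne.symm hw1) hvw)
  · intro a ha c hc hadj
    rcases ha.2 with ha' | ha'
    · exact hc.2 (Or.inr (by rw [← ha']; exact hadj))
    · exact hc.2 (Or.inr (hP3 p c a ha.1 ha' hadj (fun h => hc.2 (Or.inl h.symm))))
end

section
/- Let G be a finite simple graph such that the quotient graph Q̃(G) is prime. Then for every partition P of V(G) into at least two modules of G, the quotient graph defined by P contains Q̃(G) as an induced subgraph (up to isomorphism). -/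
open SimpleGraph

section AuxLemmas

variable {V : Type*} {G : SimpleGraph V}

lemma singleton_isModule (v : V) : IsModule G {v} := by
  intro x _
  by_cases h : G.Adj x v
  · exact Or.inl (by rintro a rfl; exact h)
  · exact Or.inr (by rintro a rfl; exact h)

lemma singleton_isStrong (v : V) : IsStrongModule G {v} := by
  refine ⟨singleton_isModule v, fun M' _ hne => ?_⟩
  obtain ⟨x, hx1, hx2⟩ := hne
  rw [Set.mem_singleton_iff] at hx1
  subst hx1
  exact Or.inl (Set.singleton_subset_iff.2 hx2)

/-- One edge between disjoint modules forces complete adjacency. -/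
lemma full_adj {M N : Set V} (hM : IsModule G M) (hN : IsModule G N)
    (hd : M ∩ N = ∅) {a b : V} (ha : a ∈ M) (hb : b ∈ N) (hab : G.Adj a b) :
    ∀ a' ∈ M, ∀ b' ∈ N, G.Adj a' b' := by
  have haN : a ∉ N := fun h => (Set.eq_empty_iff_forall_notMem.1 hd a ⟨ha, h⟩)
  have h1 : ∀ b' ∈ N, G.Adj a b' := by
    rcases hN a haN with h | h
    · exact h
    · exact absurd hab (h b hb)
  intro a' ha' b' hb'
  have hb'M : b' ∉ M := fun h => (Set.eq_empty_iff_forall_notMem.1 hd b' ⟨h, hb'⟩)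
  rcases hM b' hb'M with h | h
  · exact (h a' ha').symm
  · exact absurd (h1 b' hb').symm (h a ha)

lemma maxstrong_eq_of_inter {S S' : Set V} (hS : IsMaximalStrongModule G S)
    (hS' : IsMaximalStrongModule G S') (hi : (S ∩ S').Nonempty) : S = S' := by
  by_contra hne
  rcases hS.1.2 S' hS'.1.1 hi with h | h
  · exact hS'.2.2.1 (hS.2.2.2 S' hS'.1 (h.ssubset_of_ne hne))
  · exact hS.2.2.1 (hS'.2.2.2 S hS.1 (h.ssubset_of_ne (Ne.symm hne)))

lemma exists_maxstrong_mem [Fintype V] (hnt : Nontrivial V) (v : V) :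
    ∃ S : Set V, IsMaximalStrongModule G S ∧ v ∈ S := by
  classical
  set 𝒮 : Set (Set V) := {M | IsStrongModule G M ∧ v ∈ M ∧ M ≠ Set.univ} with h𝒮
  have hsing : ({v} : Set V) ∈ 𝒮 := by
    refine ⟨singleton_isStrong v, Set.mem_singleton v, ?_⟩
    intro h
    obtain ⟨u, hu⟩ := exists_ne v
    have : u ∈ ({v} : Set V) := h.symm ▸ Set.mem_univ u
    exact hu this
  obtain ⟨M, hM, hmax⟩ :=
    Set.Finite.exists_maximalFor Set.ncard 𝒮 (Set.toFinite _) ⟨{v}, hsing⟩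
  refine ⟨M, ⟨hM.1, ⟨v, hM.2.1⟩, hM.2.2, ?_⟩, hM.2.1⟩
  intro M' hM' hss
  by_contra hu
  have hM'𝒮 : M' ∈ 𝒮 := ⟨hM', hss.subset hM.2.1, hu⟩
  have hle : M.ncard ≤ M'.ncard := Set.ncard_le_ncard hss.subset (Set.toFinite _)
  exact absurd (hmax hM'𝒮 hle) (Set.ncard_lt_ncard hss (Set.toFinite _)).not_ge

end AuxLemmas
section MainAux

variable {V : Type*} {G : SimpleGraph V}

lemma quotientOn_adj_iff {P : Set (Set V)} {A B : ↥P} :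
    (QuotientOn G P).Adj A B ↔
      A ≠ B ∧ ∀ a ∈ (A : Set V), ∀ b ∈ (B : Set V), G.Adj a b := Iff.rfl

lemma part_subset_maxstrong [Fintype V]
    (hp : IsPrimeGraph (QuotientGraph G)) {P : Set (Set V)}
    (hmod : ∀ M ∈ P, IsModule G M) (hne : ∀ M ∈ P, M.Nonempty)
    (hdisj : P.PairwiseDisjoint id) (hcard : 2 ≤ Nat.card P)
    (hnt : Nontrivial V) {M : Set V} (hMP : M ∈ P) :
    ∃ S : Set V, IsMaximalStrongModule G S ∧ M ⊆ S := by
  classical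
  by_contra hno
  push_neg at hno
  have hsub : ∀ S : Set V, IsMaximalStrongModule G S → (S ∩ M).Nonempty → S ⊆ M := by
    intro S hS hi
    rcases hS.1.2 M (hmod M hMP) hi with h | h
    · exact h
    · exact absurd h (hno S hS)
  set T : Set {N : Set V | IsMaximalStrongModule G N} :=
    {S | (S : Set V) ⊆ M} with hT
  have hmem : ∀ S : {N : Set V | IsMaximalStrongModule G N},
      IsMaximalStrongModule G (S : Set V) := fun S => S.2
  have hTmod : IsModule (QuotientGraph G) T := by
    intro S' hS'
    have hS'd : (S' : Set V) ∩ M = ∅ := by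
      rw [Set.eq_empty_iff_forall_notMem]
      rintro x ⟨hx1, hx2⟩
      exact hS' (hsub _ (hmem S') ⟨x, hx1, hx2⟩)
    obtain ⟨x, hx⟩ := (hmem S').2.1
    have hxM : x ∉ M := fun h => Set.eq_empty_iff_forall_notMem.1 hS'd x ⟨hx, h⟩
    rcases hmod M hMP x hxM with hall | hnone
    · left
      intro A hA
      have hAM : (A : Set V) ⊆ M := hA
      have hdAS : (S' : Set V) ∩ (A : Set V) = ∅ := by
        rw [Set.eq_empty_iff_forall_notMem]
        rintro y ⟨hy1, hy2⟩
        exact Set.eq_empty_iff_forall_notMem.1 hS'd y ⟨hy1, hAM hy2⟩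
      obtain ⟨a, haA⟩ := (hmem A).2.1
      have hedge : G.Adj x a := hall a (hAM haA)
      have hfull := full_adj (hmem S').1.1 (hmem A).1.1 hdAS hx haA hedge
      refine quotientOn_adj_iff.2 ⟨?_, hfull⟩
      intro h
      exact hS' (h ▸ hA)
    · right
      intro A hA hadj
      obtain ⟨a, haA⟩ := (hmem A).2.1
      exact hnone a (hA haA) ((quotientOn_adj_iff.1 hadj).2 x hx a haA)
  rcases hp.2 T hTmod with h0 | huniv | ⟨S₀, hS₀⟩
  · obtain ⟨v, hvM⟩ := hne M hMP
    obtain ⟨S, hS, hvS⟩ := exists_maxstrong_mem hnt v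
    have : (⟨S, hS⟩ : {N : Set V | IsMaximalStrongModule G N}) ∈ T :=
      hsub S hS ⟨v, hvS, hvM⟩
    rw [h0] at this
    exact this
  · have h2 : Nontrivial ↥P := Finite.one_lt_card_iff_nontrivial.1 hcard
    obtain ⟨B, hBne⟩ := exists_ne (⟨M, hMP⟩ : ↥P)
    have hBMne : (B : Set V) ≠ M := fun h => hBne (Subtype.ext h)
    obtain ⟨b, hbB⟩ := hne B B.2
    obtain ⟨S, hS, hbS⟩ := exists_maxstrong_mem hnt b
    have hST : (⟨S, hS⟩ : {N : Set V | IsMaximalStrongModule G N}) ∈ T := by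
      rw [huniv]; trivial
    have hbM : b ∈ M := hST hbS
    exact Set.disjoint_left.mp (hdisj B.2 hMP hBMne) hbB hbM
  · refine hno (S₀ : Set V) (hmem S₀) ?_
    intro v hvM
    obtain ⟨S, hS, hvS⟩ := exists_maxstrong_mem hnt v
    have hST : (⟨S, hS⟩ : {N : Set V | IsMaximalStrongModule G N}) ∈ T :=
      hsub S hS ⟨v, hvS, hvM⟩
    rw [hS₀, Set.mem_singleton_iff] at hST
    have : S = (S₀ : Set V) := congrArg Subtype.val hST
    exact this ▸ hvS

end MainAux

/-- If Q̃(G) is prime, then every quotient graph of `G` defined by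
a partition of `V(G)` into at least two modules contains Q̃(G) as an induced
subgraph. -/
theorem stmt_6 {V : Type*} [Fintype V] (G : SimpleGraph V)
    (hp : IsPrimeGraph (QuotientGraph G)) (P : Set (Set V))
    (hmod : ∀ M ∈ P, IsModule G M) (hne : ∀ M ∈ P, M.Nonempty)
    (hdisj : P.PairwiseDisjoint id) (hcover : ⋃₀ P = Set.univ)
    (hcard : 2 ≤ Nat.card P) :
    HasInducedCopy (QuotientGraph G) (QuotientOn G P) := by
  classical
  have hnt : Nontrivial V := by
    have h2 : Nontrivial ↥P := Finite.one_lt_card_iff_nontrivial.1 hcard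
    obtain ⟨A, B, hAB⟩ := h2
    have hABne : (A : Set V) ≠ (B : Set V) := fun h => hAB (Subtype.ext h)
    obtain ⟨a, ha⟩ := hne A A.2
    obtain ⟨b, hb⟩ := hne B B.2
    refine ⟨a, b, fun h => ?_⟩
    exact Set.disjoint_left.mp (hdisj A.2 B.2 hABne) ha (h ▸ hb)
  have hmem : ∀ S : {N : Set V | IsMaximalStrongModule G N},
      IsMaximalStrongModule G (S : Set V) := fun S => S.2
  have key : ∀ S : {N : Set V | IsMaximalStrongModule G N},
      ∃ Mp : ↥P, (Mp : Set V) ⊆ (S : Set V) := by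
    intro S
    obtain ⟨v, hv⟩ := (hmem S).2.1
    have hvU : v ∈ ⋃₀ P := hcover.symm ▸ Set.mem_univ v
    obtain ⟨M, hMP, hvM⟩ := hvU
    obtain ⟨S'', hS'', hMS''⟩ :=
      part_subset_maxstrong hp hmod hne hdisj hcard hnt hMP
    have hSeq : S'' = (S : Set V) :=
      maxstrong_eq_of_inter hS'' (hmem S) ⟨v, hMS'' hvM, hv⟩
    exact ⟨⟨M, hMP⟩, hSeq ▸ hMS''⟩
  choose g hg using key
  have hginj : Function.Injective g := by
    intro S S' hgs
    obtain ⟨m, hm⟩ := hne _ (g S).2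
    have hm' : m ∈ (g S' : Set V) := hgs ▸ hm
    exact Subtype.ext
      (maxstrong_eq_of_inter (hmem S) (hmem S') ⟨m, hg S hm, hg S' hm'⟩)
  refine ⟨⟨g, hginj⟩, ?_⟩
  intro a b
  constructor
  · intro h
    obtain ⟨hne', hfull⟩ := quotientOn_adj_iff.1 h
    have hab : a ≠ b := fun h' => hne' (congrArg g h')
    have habs : (a : Set V) ≠ (b : Set V) := fun h' => hab (Subtype.ext h')
    have hd : (a : Set V) ∩ (b : Set V) = ∅ := by
      rw [Set.eq_empty_iff_forall_notMem]
      rintro y ⟨hy1, hy2⟩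
      exact habs (maxstrong_eq_of_inter (hmem a) (hmem b) ⟨y, hy1, hy2⟩)
    obtain ⟨x, hx⟩ := hne _ (g a).2
    obtain ⟨y, hy⟩ := hne _ (g b).2
    have hedge : G.Adj x y := hfull x hx y hy
    exact quotientOn_adj_iff.2
      ⟨hab, full_adj (hmem a).1.1 (hmem b).1.1 hd (hg a hx) (hg b hy) hedge⟩
  · intro h
    obtain ⟨hne', hfull⟩ := quotientOn_adj_iff.1 h
    refine quotientOn_adj_iff.2 ⟨fun h' => hne' (hginj h'), ?_⟩
    intro x hx y hy
    exact hfull x (hg a hx) y (hg b hy)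
end
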